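/- arXiv:2507.14669 — 4 statements merged into one kernel-verified Lean document; each statement's English description precedes it below -/
import Mathlib

section
/- If two finite simple graphs G₁ and G₂ are distinguished by the Weisfeiler–Leman test (i.e., for some k the multisets of k-level WL labels of their vertices differ), then there exists a tree T such that the number of graph homomorphisms from T to G₁ differs from the number of graph homomorphisms from T to G₂. -/
/-- The type of `k`-level Weisfeiler–Leman labels. -/
def WLLabel : ℕ → Type
  | 0 => Unit
  | k + 1 => Multiset (WLLabel k)

/-- The `k`-level Weisfeiler–Leman label of a vertex. -/
def wlLabel {V : Type} [Fintype V] (G : SimpleGraph V) [DecidableRel G.Adj] :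
    (k : ℕ) → V → WLLabel k
  | 0, _ => ()
  | k + 1, v => (G.neighborFinset v).val.map (wlLabel G k)

/-- The multiset of `k`-level WL labels of all vertices of `G`. -/
def wlMultiset {V : Type} [Fintype V] (G : SimpleGraph V) [DecidableRel G.Adj] (k : ℕ) :
    Multiset (WLLabel k) :=
  (Finset.univ : Finset V).val.map (wlLabel G k)



inductive RTree : Type
  | node : List RTree → RTree

theorem RTree.sizeOf_lt {t : RTree} {ts : List RTree} (h : t ∈ ts) :
    sizeOf t < sizeOf (RTree.node ts) := by
  have := List.sizeOf_lt_of_mem h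
  simp only [RTree.node.sizeOf_spec]
  omega

def RTree.depth : RTree → ℕ
  | .node ts => (ts.attach.map fun t => RTree.depth t.1 + 1).foldr max 0
decreasing_by exact RTree.sizeOf_lt t.2

def homC {V : Type} [Fintype V] (G : SimpleGraph V) [DecidableRel G.Adj] :
    RTree → V → ℕ
  | .node ts => fun v => (ts.attach.map fun t => ∑ w ∈ G.neighborFinset v, homC G t.1 w).prod
decreasing_by exact RTree.sizeOf_lt t.2

def lHomC : RTree → (k : ℕ) → WLLabel k → ℕ
  | .node _, 0, _ => 1
  | .node ts, k + 1, ℓ =>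
      (ts.attach.map fun t => (Multiset.map (lHomC t.1 k) (ℓ : Multiset (WLLabel k))).sum).prod
termination_by t => t
decreasing_by exact RTree.sizeOf_lt t.2

theorem foldr_max_le_iff {l : List ℕ} {k : ℕ} : l.foldr max 0 ≤ k ↔ ∀ x ∈ l, x ≤ k := by
  induction l with
  | nil => simp
  | cons a l ih => simp [ih]

theorem depth_node_le_iff {ts : List RTree} {k : ℕ} :
    (RTree.node ts).depth ≤ k ↔ ∀ t ∈ ts, t.depth + 1 ≤ k := by
  rw [RTree.depth, foldr_max_le_iff]
  constructor
  · intro h t ht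
    exact h _ (List.mem_map.2 ⟨⟨t, ht⟩, List.mem_attach _ _, rfl⟩)
  · rintro h x hx
    obtain ⟨⟨t, ht⟩, -, rfl⟩ := List.mem_map.1 hx
    exact h t ht

theorem homC_node {V : Type} [Fintype V] (G : SimpleGraph V) [DecidableRel G.Adj]
    (ts : List RTree) (v : V) :
    homC G (.node ts) v = (ts.map fun t => ∑ w ∈ G.neighborFinset v, homC G t w).prod := by
  simp only [homC]
  rw [List.attach_map_val (l := ts) (f := fun t => ∑ w ∈ G.neighborFinset v, homC G t w)]

theorem lHomC_node_succ (ts : List RTree) (k : ℕ) (ℓ : WLLabel (k + 1)) :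
    lHomC (.node ts) (k + 1) ℓ
      = (ts.map fun t => (Multiset.map (lHomC t k) (ℓ : Multiset (WLLabel k))).sum).prod := by
  rw [lHomC]
  rw [List.attach_map_val (l := ts) (f := fun t => (Multiset.map (lHomC t k) (ℓ : Multiset (WLLabel k))).sum)]

theorem lHomC_nil (k : ℕ) (ℓ : WLLabel k) : lHomC (.node []) k ℓ = 1 := by
  cases k with
  | zero => rw [lHomC]
  | succ k => rw [lHomC_node_succ]; rfl

theorem homC_eq_lHomC_aux {V : Type} [Fintype V] (G : SimpleGraph V) [DecidableRel G.Adj]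
    (ts : List RTree) (k : ℕ) (h : (RTree.node ts).depth ≤ k) (v : V) :
    homC G (.node ts) v = lHomC (.node ts) k (wlLabel G k v) := by
  cases k with
  | zero =>
    have hts : ts = [] := by
      rw [depth_node_le_iff] at h
      cases ts with
      | nil => rfl
      | cons a l => exact absurd (h a (by simp)) (by omega)
    subst hts
    rw [homC_node, lHomC_nil]
    rfl
  | succ k =>
    rw [homC_node, lHomC_node_succ]
    congr 1
    apply List.map_congr_left
    intro t' ht'
    have hd : t'.depth ≤ k := by
      have := depth_node_le_iff.1 h t' ht'
      omega
    have : wlLabel G (k + 1) v = (G.neighborFinset v).val.map (wlLabel G k) := rfl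
    rw [this, Multiset.map_map, Finset.sum_eq_multiset_sum]
    congr 1
    apply Multiset.map_congr rfl
    intro w hw
    obtain ⟨ts'⟩ := t'
    exact homC_eq_lHomC_aux G ts' k hd w
termination_by sizeOf (RTree.node ts)
decreasing_by exact RTree.sizeOf_lt ht'

theorem homC_eq_lHomC {V : Type} [Fintype V] (G : SimpleGraph V) [DecidableRel G.Adj]
    (t : RTree) (k : ℕ) (h : t.depth ≤ k) (v : V) :
    homC G t v = lHomC t k (wlLabel G k v) := by
  obtain ⟨ts⟩ := t
  exact homC_eq_lHomC_aux G ts k h v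


section SpanTools
variable {α : Type}

theorem span_mul_mem (F : Set (α → ℚ)) (hF : ∀ f ∈ F, ∀ g ∈ F, f * g ∈ F)
    {x y : α → ℚ} (hx : x ∈ Submodule.span ℚ F) (hy : y ∈ Submodule.span ℚ F) :
    x * y ∈ Submodule.span ℚ F := by
  induction hx, hy using Submodule.span_induction₂ with
  | mem_mem f g hf hg => exact Submodule.subset_span (hF f hf g hg)
  | zero_left => simpa using Submodule.zero_mem _
  | zero_right => simpa using Submodule.zero_mem _
  | add_left x y z _ _ _ hxz hyz => rw [add_mul]; exact Submodule.add_mem _ hxz hyz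
  | add_right x y z _ _ _ hxy hxz => rw [mul_add]; exact Submodule.add_mem _ hxy hxz
  | smul_left c x y _ _ hxy => rw [smul_mul_assoc]; exact Submodule.smul_mem _ _ hxy
  | smul_right c x y _ _ hxy => rw [mul_smul_comm]; exact Submodule.smul_mem _ _ hxy

theorem exists_indicator [DecidableEq α] (F : Set (α → ℚ)) (h1 : (1 : α → ℚ) ∈ F)
    (hmul : ∀ f ∈ F, ∀ g ∈ F, f * g ∈ F) (S : Finset α)
    (hsep : ∀ a ∈ S, ∀ b ∈ S, a ≠ b → ∃ f ∈ F, f a ≠ f b) (a : α) (ha : a ∈ S) :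
    ∃ g ∈ Submodule.span ℚ F, g a = 1 ∧ ∀ b ∈ S, b ≠ a → g b = 0 := by
  have hch : ∀ b : {b // b ∈ S.erase a}, ∃ f ∈ F, f a ≠ f b.1 := by
    rintro ⟨b, hb⟩
    exact hsep a ha b (Finset.mem_of_mem_erase hb) (Ne.symm (Finset.ne_of_mem_erase hb))
  choose f hfF hfne using hch
  set g : α → ℚ := ∏ b ∈ (S.erase a).attach,
      (f b a - f b b.1)⁻¹ • (f b - (f b b.1) • (1 : α → ℚ)) with hg
  refine ⟨g, ?_, ?_, ?_⟩
  · apply Finset.prod_induction _ (· ∈ Submodule.span ℚ F) (fun x y hx hy => span_mul_mem F hmul hx hy)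
    · simpa using Submodule.subset_span h1
    · intro b _
      apply Submodule.smul_mem
      exact Submodule.sub_mem _ (Submodule.subset_span (hfF b))
        (Submodule.smul_mem _ _ (Submodule.subset_span h1))
  · rw [hg, Finset.prod_apply]
    apply Finset.prod_eq_one
    intro b _
    have h := sub_ne_zero_of_ne (hfne b)
    simp only [Pi.smul_apply, Pi.sub_apply, Pi.one_apply, smul_eq_mul]
    field_simp
  · intro b hb hne
    rw [hg, Finset.prod_apply]
    apply Finset.prod_eq_zero (Finset.mem_attach _ ⟨b, Finset.mem_erase.2 ⟨hne, hb⟩⟩)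
    simp

theorem span_sum_stat (F : Set (α → ℚ)) (m₁ m₂ : Multiset α)
    (h : ∀ f ∈ F, (m₁.map f).sum = (m₂.map f).sum) :
    ∀ g ∈ Submodule.span ℚ F, (m₁.map g).sum = (m₂.map g).sum := by
  intro g hg
  induction hg using Submodule.span_induction with
  | mem f hf => exact h f hf
  | zero => simp [Multiset.map_const']
  | add x y hx hy ihx ihy =>
    have : ∀ m : Multiset α, (m.map (x + y)).sum = (m.map x).sum + (m.map y).sum := by
      intro m
      rw [← Multiset.sum_map_add]
      rfl
    rw [this, this, ihx, ihy]
  | smul c x hx ihx =>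
    have : ∀ m : Multiset α, (m.map (c • x)).sum = c * (m.map x).sum := by
      intro m
      rw [← Multiset.sum_map_mul_left]
      rfl
    rw [this, this, ihx]

theorem sum_map_indicator [DecidableEq α] (m : Multiset α) (g : α → ℚ) (a : α)
    (h : ∀ x ∈ m, g x = if x = a then 1 else 0) : (m.map g).sum = m.count a := by
  induction m using Multiset.induction_on with
  | empty => simp
  | cons x s ih =>
    rw [Multiset.map_cons, Multiset.sum_cons, Multiset.count_cons,
      ih (fun y hy => h y (Multiset.mem_cons_of_mem hy)), h x (Multiset.mem_cons_self x s)]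
    by_cases hx : x = a
    · simp [hx]; push_cast; ring
    · simp [hx, Ne.symm hx]

end SpanTools


theorem depth_nil_le (k : ℕ) : (RTree.node []).depth ≤ k := by
  rw [depth_node_le_iff]; simp

theorem lHomC_append (s s' : List RTree) (k : ℕ) (ℓ : WLLabel k) :
    lHomC (.node (s ++ s')) k ℓ = lHomC (.node s) k ℓ * lHomC (.node s') k ℓ := by
  cases k with
  | zero => rw [lHomC, lHomC, lHomC]
  | succ k => rw [lHomC_node_succ, lHomC_node_succ, lHomC_node_succ, List.map_append,
      List.prod_append]

theorem depth_append_le {s s' : List RTree} {k : ℕ}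
    (h : (RTree.node s).depth ≤ k) (h' : (RTree.node s').depth ≤ k) :
    (RTree.node (s ++ s')).depth ≤ k := by
  rw [depth_node_le_iff] at *
  intro t ht
  rcases List.mem_append.1 ht with ht | ht
  · exact h t ht
  · exact h' t ht

theorem mset_eq {k : ℕ}
    (hsep : ∀ a b : WLLabel k, a ≠ b →
      ∃ t : RTree, t.depth ≤ k ∧ lHomC t k a ≠ lHomC t k b)
    (m₁ m₂ : Multiset (WLLabel k))
    (H : ∀ t : RTree, t.depth ≤ k →
      (m₁.map (lHomC t k)).sum = (m₂.map (lHomC t k)).sum) :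
    m₁ = m₂ := by
  classical
  set F : Set (WLLabel k → ℚ) :=
    {f | ∃ t : RTree, t.depth ≤ k ∧ f = fun ℓ => (lHomC t k ℓ : ℚ)} with hF
  have h1 : (1 : WLLabel k → ℚ) ∈ F := by
    refine ⟨.node [], depth_nil_le k, ?_⟩
    funext ℓ
    rw [lHomC_nil]
    simp
  have hmul : ∀ f ∈ F, ∀ g ∈ F, f * g ∈ F := by
    rintro f ⟨⟨ts⟩, hts, rfl⟩ g ⟨⟨ts'⟩, hts', rfl⟩
    refine ⟨.node (ts ++ ts'), depth_append_le hts hts', ?_⟩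
    funext ℓ
    rw [Pi.mul_apply, lHomC_append]
    push_cast
    ring
  have hQ : ∀ f ∈ F, ((m₁.map f).sum = (m₂.map f).sum) := by
    rintro f ⟨t, ht, rfl⟩
    have h := H t ht
    have cast_eq : ∀ m : Multiset (WLLabel k),
        (m.map fun ℓ => ((lHomC t k ℓ : ℚ))).sum = ((m.map (lHomC t k)).sum : ℕ) := by
      intro m
      rw [Nat.cast_multiset_sum, Multiset.map_map]
      rfl
    rw [cast_eq, cast_eq, h]
  set S : Finset (WLLabel k) := (m₁ + m₂).toFinset with hS
  have count_eq : ∀ a : WLLabel k, m₁.count a = m₂.count a := by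
    intro a
    by_cases haS : a ∈ S
    · have hsep' : ∀ x ∈ S, ∀ y ∈ S, x ≠ y → ∃ f ∈ F, f x ≠ f y := by
        intro x _ y _ hxy
        obtain ⟨t, ht, hne⟩ := hsep x y hxy
        exact ⟨_, ⟨t, ht, rfl⟩, fun hc => hne (Nat.cast_injective hc)⟩
      obtain ⟨g, hgspan, hga, hg0⟩ := exists_indicator F h1 hmul S hsep' a haS
      have hgind : ∀ x ∈ (m₁ + m₂), g x = if x = a then 1 else 0 := by
        intro x hx
        by_cases hxa : x = a
        · simp [hxa, hga]
        · simp [hxa, hg0 x (Multiset.mem_toFinset.2 hx) hxa]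
      have e₁ : (m₁.map g).sum = (m₁.count a : ℚ) :=
        sum_map_indicator m₁ g a fun x hx => hgind x (Multiset.mem_add.2 (Or.inl hx))
      have e₂ : (m₂.map g).sum = (m₂.count a : ℚ) :=
        sum_map_indicator m₂ g a fun x hx => hgind x (Multiset.mem_add.2 (Or.inr hx))
      have hse := span_sum_stat F m₁ m₂ hQ g hgspan
      rw [e₁, e₂] at hse
      exact_mod_cast hse
    · have h₁ : a ∉ m₁ := fun hc => haS (Multiset.mem_toFinset.2 (Multiset.mem_add.2 (Or.inl hc)))
      have h₂ : a ∉ m₂ := fun hc => haS (Multiset.mem_toFinset.2 (Multiset.mem_add.2 (Or.inr hc)))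
      rw [Multiset.count_eq_zero_of_notMem h₁, Multiset.count_eq_zero_of_notMem h₂]
  exact Multiset.ext.2 count_eq

theorem sep_pt : ∀ (k : ℕ) (a b : WLLabel k),
    (∀ t : RTree, t.depth ≤ k → lHomC t k a = lHomC t k b) → a = b := by
  intro k
  induction k with
  | zero => intro a b _; exact Subsingleton.elim (α := Unit) a b
  | succ k ih =>
    intro a b hab
    have hsep : ∀ x y : WLLabel k, x ≠ y →
        ∃ t : RTree, t.depth ≤ k ∧ lHomC t k x ≠ lHomC t k y := by
      intro x y hxy
      by_contra hc
      push_neg at hc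
      exact hxy (ih x y hc)
    refine mset_eq hsep a b ?_
    intro t ht
    have hd : (RTree.node [t]).depth ≤ k + 1 := by
      rw [depth_node_le_iff]
      intro t' ht'
      simp only [List.mem_singleton] at ht'
      subst ht'
      omega
    have h2 := hab (.node [t]) hd
    rw [lHomC_node_succ, lHomC_node_succ] at h2
    simpa using h2


/-- A rooted finite graph. -/
structure RGraph : Type 1 where
  V : Type
  [fin : Finite V]
  G : SimpleGraph V
  root : V

attribute [instance] RGraph.fin

def RGraph.single : RGraph := ⟨PUnit, ⊥, PUnit.unit⟩

def joinAdj (A B : RGraph) : (A.V ⊕ B.V) → (A.V ⊕ B.V) → Prop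
  | .inl a, .inl b => A.G.Adj a b
  | .inr a, .inr b => B.G.Adj a b
  | .inl a, .inr b => a = A.root ∧ b = B.root
  | .inr a, .inl b => b = A.root ∧ a = B.root

def RGraph.join (A B : RGraph) : RGraph where
  V := A.V ⊕ B.V
  G := { Adj := joinAdj A B
         symm := ⟨by
           rintro (a | a) (b | b) h
           · exact A.G.adj_symm h
           · exact ⟨h.1, h.2⟩
           · exact ⟨h.1, h.2⟩
           · exact B.G.adj_symm h⟩
         loopless := ⟨by
           rintro (a | a) h
           · exact A.G.loopless.irrefl a h
           · exact B.G.loopless.irrefl a h⟩ }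
  root := Sum.inl A.root

theorem join_adj_inl_inl {A B : RGraph} {a b : A.V} :
    (A.join B).G.Adj (Sum.inl a) (Sum.inl b) ↔ A.G.Adj a b := Iff.rfl

theorem join_adj_inr_inr {A B : RGraph} {a b : B.V} :
    (A.join B).G.Adj (Sum.inr a) (Sum.inr b) ↔ B.G.Adj a b := Iff.rfl

theorem join_adj_inl_inr {A B : RGraph} {a : A.V} {b : B.V} :
    (A.join B).G.Adj (Sum.inl a) (Sum.inr b) ↔ a = A.root ∧ b = B.root := Iff.rfl

theorem join_adj_inr_inl {A B : RGraph} {a : B.V} {b : A.V} :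
    (A.join B).G.Adj (Sum.inr a) (Sum.inl b) ↔ b = A.root ∧ a = B.root := Iff.rfl

theorem single_isTree : RGraph.single.G.IsTree := by
  constructor
  · refine @SimpleGraph.Connected.mk _ _ ?_ ⟨PUnit.unit⟩
    intro u v
    have : u = v := rfl
    subst this
    rfl
  · exact SimpleGraph.isAcyclic_bot

/-- Collapse reachability along a map that sends edges to edges or collapses them. -/
theorem reachable_collapse {α β : Type} {J : SimpleGraph α} {G : SimpleGraph β} (f : α → β)
    (hf : ∀ a b, J.Adj a b → f a = f b ∨ G.Adj (f a) (f b)) {x y : α}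
    (h : J.Reachable x y) : G.Reachable (f x) (f y) := by
  obtain ⟨w⟩ := h
  induction w with
  | nil => rfl
  | cons ha p ih =>
    rcases hf _ _ ha with he | he
    · rw [he] at *; exact ih
    · exact (he.reachable).trans ih

theorem join_connected {A B : RGraph} (hA : A.G.Connected) (hB : B.G.Connected) :
    (A.join B).G.Connected := by
  have hroot : ∀ x : (A.join B).V, (A.join B).G.Reachable x (Sum.inl A.root) := by
    rintro (a | b)
    · have := hA a A.root
      exact this.map ⟨Sum.inl, fun h => h⟩
    · have h1 : (A.join B).G.Reachable (Sum.inr b) (Sum.inr B.root) :=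
        (hB b B.root).map ⟨Sum.inr, fun h => h⟩
      exact h1.trans (SimpleGraph.Adj.reachable (by exact ⟨rfl, rfl⟩))
  refine @SimpleGraph.Connected.mk _ _ ?_ ⟨Sum.inl A.root⟩
  intro x y
  exact (hroot x).trans (hroot y).symm

theorem sym2_inl_eq {α β : Type} {a b c d : α} :
    s(Sum.inl (β := β) a, Sum.inl b) = s(Sum.inl (β := β) c, Sum.inl d) ↔ s(a,b) = s(c,d) := by
  constructor
  · intro h
    rcases Sym2.eq_iff.1 h with ⟨h1, h2⟩ | ⟨h1, h2⟩
    · cases h1; cases h2; rfl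
    · injection h1 with h1; injection h2 with h2; subst h1; subst h2; exact Sym2.eq_swap
  · intro h
    rcases Sym2.eq_iff.1 h with ⟨h1, h2⟩ | ⟨h1, h2⟩
    · subst h1; subst h2; rfl
    · subst h1; subst h2; exact Sym2.eq_swap

theorem sym2_inr_eq {α β : Type} {a b c d : β} :
    s(Sum.inr (α := α) a, Sum.inr b) = s(Sum.inr (α := α) c, Sum.inr d) ↔ s(a,b) = s(c,d) := by
  constructor
  · intro h
    rcases Sym2.eq_iff.1 h with ⟨h1, h2⟩ | ⟨h1, h2⟩
    · injection h1 with h1; injection h2 with h2; subst h1; subst h2; rfl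
    · injection h1 with h1; injection h2 with h2; subst h1; subst h2; exact Sym2.eq_swap
  · intro h
    rcases Sym2.eq_iff.1 h with ⟨h1, h2⟩ | ⟨h1, h2⟩
    · subst h1; subst h2; rfl
    · subst h1; subst h2; exact Sym2.eq_swap

theorem join_isTree {A B : RGraph} (hA : A.G.IsTree) (hB : B.G.IsTree) :
    (A.join B).G.IsTree := by
  refine ⟨join_connected hA.1 hB.1, ?_⟩
  rw [SimpleGraph.isAcyclic_iff_forall_adj_isBridge]
  have hAb := SimpleGraph.isAcyclic_iff_forall_adj_isBridge.1 hA.2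
  have hBb := SimpleGraph.isAcyclic_iff_forall_adj_isBridge.1 hB.2
  have adj_ne : ∀ {x y : (A.join B).V}, (A.join B).G.Adj x y → x ≠ y :=
    fun h => SimpleGraph.Adj.ne h
  rintro (a | a) (b | b) hadj
  · -- edge inside A
    refine SimpleGraph.isBridge_iff.2 ?_
    intro hreach; rw [SimpleGraph.deleteEdges] at hreach
    have hA' : A.G.Adj a b := hadj
    have hcol := reachable_collapse (G := A.G \ SimpleGraph.fromEdgeSet {s(a, b)})
      (Sum.elim id (fun _ => A.root)) ?_ hreach
    · exact (SimpleGraph.isBridge_iff.1 (hAb hA')) hcol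
    · rintro (x | x) (y | y) hxy <;>
        replace hxy : _ ∧ ¬ (_ ∧ _) := ⟨((SimpleGraph.sdiff_adj _ _ _ _).1 hxy).1,
          fun hc => ((SimpleGraph.sdiff_adj _ _ _ _).1 hxy).2 ((SimpleGraph.fromEdgeSet_adj _).2 hc)⟩
      · right
        rw [SimpleGraph.sdiff_adj, SimpleGraph.fromEdgeSet_adj]
        refine ⟨hxy.1, fun hc => ?_⟩
        exact hxy.2 ⟨by
          simp only [Set.mem_singleton_iff] at hc ⊢
          exact sym2_inl_eq.2 hc.1, hxy.1.ne⟩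
      · left
        have := hxy.1
        simp only [join_adj_inl_inr] at this
        simp [this.1]
      · left
        have := hxy.1
        simp only [join_adj_inr_inl] at this
        simp [this.1]
      · left; simp
  · -- middle edge (inl, inr)
    refine SimpleGraph.isBridge_iff.2 ?_
    intro hreach; rw [SimpleGraph.deleteEdges] at hreach
    obtain ⟨ha, hb⟩ := (join_adj_inl_inr).1 hadj
    subst ha; subst hb
    have hcol := reachable_collapse (G := (⊥ : SimpleGraph Bool))
      (Sum.elim (fun _ => false) (fun _ => true)) ?_ hreach
    · simp only [Sum.elim_inl, Sum.elim_inr, SimpleGraph.reachable_bot] at hcol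
      exact Bool.false_ne_true hcol
    · rintro (x | x) (y | y) hxy <;>
        replace hxy : _ ∧ ¬ (_ ∧ _) := ⟨((SimpleGraph.sdiff_adj _ _ _ _).1 hxy).1,
          fun hc => ((SimpleGraph.sdiff_adj _ _ _ _).1 hxy).2 ((SimpleGraph.fromEdgeSet_adj _).2 hc)⟩
      · left; simp
      · exfalso
        obtain ⟨hx, hy⟩ := (join_adj_inl_inr).1 hxy.1
        subst hx; subst hy
        exact hxy.2 ⟨Set.mem_singleton _, SimpleGraph.Adj.ne hxy.1⟩
      · exfalso
        obtain ⟨hy, hx⟩ := (join_adj_inr_inl).1 hxy.1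
        subst hx; subst hy
        refine hxy.2 ⟨Set.mem_singleton_iff.2 Sym2.eq_swap, SimpleGraph.Adj.ne hxy.1⟩
      · left; simp
  · -- middle edge (inr, inl)
    refine SimpleGraph.isBridge_iff.2 ?_
    intro hreach; rw [SimpleGraph.deleteEdges] at hreach
    obtain ⟨hb, ha⟩ := (join_adj_inr_inl).1 hadj
    subst ha; subst hb
    have hcol := reachable_collapse (G := (⊥ : SimpleGraph Bool))
      (Sum.elim (fun _ => false) (fun _ => true)) ?_ hreach
    · simp only [Sum.elim_inl, Sum.elim_inr, SimpleGraph.reachable_bot] at hcol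
      exact Bool.false_ne_true hcol.symm
    · rintro (x | x) (y | y) hxy <;>
        replace hxy : _ ∧ ¬ (_ ∧ _) := ⟨((SimpleGraph.sdiff_adj _ _ _ _).1 hxy).1,
          fun hc => ((SimpleGraph.sdiff_adj _ _ _ _).1 hxy).2 ((SimpleGraph.fromEdgeSet_adj _).2 hc)⟩
      · left; simp
      · exfalso
        obtain ⟨hx, hy⟩ := (join_adj_inl_inr).1 hxy.1
        subst hx; subst hy
        refine hxy.2 ⟨Set.mem_singleton_iff.2 Sym2.eq_swap, SimpleGraph.Adj.ne hxy.1⟩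
      · exfalso
        obtain ⟨hy, hx⟩ := (join_adj_inr_inl).1 hxy.1
        subst hx; subst hy
        refine hxy.2 ⟨Set.mem_singleton _, SimpleGraph.Adj.ne hxy.1⟩
      · left; simp
  · -- edge inside B
    refine SimpleGraph.isBridge_iff.2 ?_
    intro hreach; rw [SimpleGraph.deleteEdges] at hreach
    have hB' : B.G.Adj a b := hadj
    have hcol := reachable_collapse (G := B.G \ SimpleGraph.fromEdgeSet {s(a, b)})
      (Sum.elim (fun _ => B.root) id) ?_ hreach
    · exact (SimpleGraph.isBridge_iff.1 (hBb hB')) hcol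
    · rintro (x | x) (y | y) hxy <;>
        replace hxy : _ ∧ ¬ (_ ∧ _) := ⟨((SimpleGraph.sdiff_adj _ _ _ _).1 hxy).1,
          fun hc => ((SimpleGraph.sdiff_adj _ _ _ _).1 hxy).2 ((SimpleGraph.fromEdgeSet_adj _).2 hc)⟩
      · left; simp
      · left
        have := hxy.1
        simp only [join_adj_inl_inr] at this
        simp [this.2]
      · left
        have := hxy.1
        simp only [join_adj_inr_inl] at this
        simp [this.2]
      · right
        rw [SimpleGraph.sdiff_adj, SimpleGraph.fromEdgeSet_adj]
        refine ⟨hxy.1, fun hc => ?_⟩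
        exact hxy.2 ⟨by
          simp only [Set.mem_singleton_iff] at hc ⊢
          exact sym2_inr_eq.2 hc.1, hxy.1.ne⟩


theorem nat_card_sigma {ι : Type} [Fintype ι] (f : ι → Type) [∀ i, Finite (f i)] :
    Nat.card (Σ i, f i) = ∑ i, Nat.card (f i) := by
  classical
  have : ∀ i, Fintype (f i) := fun i => Fintype.ofFinite (f i)
  simp [Nat.card_eq_fintype_card, Fintype.card_sigma]

section Counting

variable {V : Type} [Fintype V] (G : SimpleGraph V) [DecidableRel G.Adj]

instance homFinite {W : Type} [Finite W] (H : SimpleGraph W) : Finite (H →g G) :=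
  Finite.of_injective (fun f => (f : W → V)) DFunLike.coe_injective

/-- Number of homomorphisms of a rooted graph into `G` sending the root to `v`. -/
noncomputable def rcR (R : RGraph) (v : V) : ℕ :=
  Nat.card {f : R.G →g G // f R.root = v}

theorem rc_single (v : V) : rcR G RGraph.single v = 1 := by
  rw [rcR]
  rw [Nat.card_congr (α := {f : RGraph.single.G →g G // f RGraph.single.root = v})
    (β := PUnit.{1}) ?_]
  · simp
  · exact
      { toFun := fun _ => PUnit.unit
        invFun := fun _ => ⟨⟨fun _ => v, fun {a b} h => False.elim h⟩, rfl⟩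
        left_inv := fun f => Subtype.ext (DFunLike.ext _ _ fun x => f.2.symm)
        right_inv := fun _ => rfl }

def homSplit (A B : RGraph) (v : V) :
    {f : (A.join B).G →g G // f (A.join B).root = v} ≃
      ({g : A.G →g G // g A.root = v} × {h : B.G →g G // G.Adj v (h B.root)}) where
  toFun f :=
    (⟨SimpleGraph.Hom.comp f.1 ⟨Sum.inl, fun {a b} h => h⟩, f.2⟩,
     ⟨SimpleGraph.Hom.comp f.1 ⟨Sum.inr, fun {a b} h => h⟩, by
        have hadj : (A.join B).G.Adj (Sum.inl A.root) (Sum.inr B.root) := ⟨rfl, rfl⟩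
        have h2 := f.1.map_rel hadj
        have h3 : f.1 (Sum.inl A.root) = v := f.2
        rw [h3] at h2
        exact h2⟩)
  invFun gh :=
    ⟨⟨Sum.elim gh.1.1 gh.2.1, by
        rintro (a | a) (b | b) hab
        · exact gh.1.1.map_rel hab
        · obtain ⟨h1, h2⟩ := (join_adj_inl_inr (A := A) (B := B)).1 hab
          subst h1; subst h2
          simp only [Sum.elim_inl, Sum.elim_inr]
          rw [gh.1.2]
          exact gh.2.2
        · obtain ⟨h1, h2⟩ := (join_adj_inr_inl (A := A) (B := B)).1 hab
          subst h1; subst h2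
          simp only [Sum.elim_inl, Sum.elim_inr]
          rw [gh.1.2]
          exact (gh.2.2).symm
        · exact gh.2.1.map_rel hab⟩,
      gh.1.2⟩
  left_inv f := Subtype.ext (DFunLike.ext _ _ (by rintro (a | a) <;> rfl))
  right_inv gh := by
    refine Prod.ext (Subtype.ext (DFunLike.ext _ _ fun a => rfl))
      (Subtype.ext (DFunLike.ext _ _ fun a => rfl))

def homFiber (B : RGraph) (v : V) :
    {h : B.G →g G // G.Adj v (h B.root)} ≃
      Σ w : (G.neighborFinset v : Finset V), {h : B.G →g G // h B.root = w.1} := by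
  refine Equiv.trans
    (Equiv.sigmaFiberEquiv (f := fun h : {h : B.G →g G // G.Adj v (h B.root)} =>
      (⟨h.1 B.root, (SimpleGraph.mem_neighborFinset _ _ _).2 h.2⟩ :
        (G.neighborFinset v : Finset V)))).symm
    (Equiv.sigmaCongrRight fun w => ?_)
  exact
    { toFun := fun x => ⟨x.1.1, by
        have := congrArg Subtype.val x.2
        exact this⟩
      invFun := fun h => ⟨⟨h.1, by
          rw [h.2]
          exact (SimpleGraph.mem_neighborFinset _ _ _).1 w.2⟩,
        Subtype.ext h.2⟩
      left_inv := fun x => Subtype.ext (Subtype.ext rfl)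
      right_inv := fun h => Subtype.ext rfl }

theorem rc_join (A B : RGraph) (v : V) :
    rcR G (A.join B) v = rcR G A v * ∑ w ∈ G.neighborFinset v, rcR G B w := by
  rw [rcR, Nat.card_congr (homSplit G A B v), Nat.card_prod,
    Nat.card_congr (homFiber G B v), nat_card_sigma]
  rw [rcR]
  congr 1
  rw [← Finset.sum_coe_sort (G.neighborFinset v) (fun w => rcR G B w)]
  rfl

theorem card_hom_eq_sum (R : RGraph) :
    Nat.card (R.G →g G) = ∑ v, rcR G R v := by
  have e : (R.G →g G) ≃ Σ v : V, {f : R.G →g G // f R.root = v} :=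
    { toFun := fun f => ⟨f R.root, f, rfl⟩
      invFun := fun s => s.2.1
      left_inv := fun f => rfl
      right_inv := fun s => by obtain ⟨v, f, rfl⟩ := s; rfl }
  rw [Nat.card_congr e, nat_card_sigma]
  rfl

end Counting

def RGraph.ofTree : RTree → RGraph
  | .node ts => ts.attach.foldr (fun t acc => acc.join (RGraph.ofTree t.1)) RGraph.single
decreasing_by exact RTree.sizeOf_lt t.2

theorem ofTree_isTree_aux (ts : List RTree) :
    (RGraph.ofTree (.node ts)).G.IsTree := by
  rw [RGraph.ofTree]
  suffices h : ∀ l : List {x // x ∈ ts},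
      ((l.foldr (fun t acc => acc.join (RGraph.ofTree t.1)) RGraph.single).G.IsTree) from
    h ts.attach
  intro l
  induction l with
  | nil => exact single_isTree
  | cons t l ih =>
    refine join_isTree ih ?_
    obtain ⟨⟨ts'⟩, ht⟩ := t
    exact ofTree_isTree_aux ts'
termination_by sizeOf (RTree.node ts)
decreasing_by exact RTree.sizeOf_lt ht

theorem ofTree_isTree (t : RTree) : (RGraph.ofTree t).G.IsTree := by
  obtain ⟨ts⟩ := t
  exact ofTree_isTree_aux ts

theorem rc_ofTree_aux {V : Type} [Fintype V] (G : SimpleGraph V) [DecidableRel G.Adj]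
    (ts : List RTree) (v : V) :
    rcR G (RGraph.ofTree (.node ts)) v = homC G (.node ts) v := by
  rw [RGraph.ofTree]
  have key : ∀ l : List {x // x ∈ ts},
      rcR G (l.foldr (fun t acc => acc.join (RGraph.ofTree t.1)) RGraph.single) v
        = (l.map fun t => ∑ w ∈ G.neighborFinset v, homC G t.1 w).prod := by
    intro l
    induction l with
    | nil => simpa using rc_single G v
    | cons t l ih =>
      rw [List.foldr_cons, rc_join, ih, List.map_cons, List.prod_cons, mul_comm]
      congr 1
      apply Finset.sum_congr rfl
      intro w _
      obtain ⟨⟨ts'⟩, ht⟩ := t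
      exact rc_ofTree_aux G ts' w
  rw [key ts.attach, homC]
termination_by sizeOf (RTree.node ts)
decreasing_by exact RTree.sizeOf_lt ht

theorem rc_ofTree {V : Type} [Fintype V] (G : SimpleGraph V) [DecidableRel G.Adj]
    (t : RTree) (v : V) : rcR G (RGraph.ofTree t) v = homC G t v := by
  obtain ⟨ts⟩ := t
  exact rc_ofTree_aux G ts v


theorem isTree_of_iso {α β : Type} {T : SimpleGraph α} {T' : SimpleGraph β}
    (e : T ≃g T') (h : T'.IsTree) : T.IsTree := by
  constructor
  · exact (SimpleGraph.Iso.connected_iff e).2 h.1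
  · intro v c hc
    exact h.2 (c.map e.toHom)
      ((SimpleGraph.Walk.map_isCycle_iff_of_injective (e.toEquiv.injective)).2 hc)

def homCongr {α β W : Type} {T : SimpleGraph α} {T' : SimpleGraph β} (e : T ≃g T')
    (H : SimpleGraph W) : (T →g H) ≃ (T' →g H) where
  toFun f := f.comp e.symm.toHom
  invFun g := g.comp e.toHom
  left_inv f := DFunLike.ext _ _ fun x => by
    simp [SimpleGraph.Hom.comp]
  right_inv g := DFunLike.ext _ _ fun x => by
    simp [SimpleGraph.Hom.comp]

theorem sum_stat_eq_card {W : Type} [Fintype W] (H : SimpleGraph W) [DecidableRel H.Adj]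
    (t : RTree) {k : ℕ} (ht : t.depth ≤ k) :
    ((wlMultiset H k).map (lHomC t k)).sum = Nat.card ((RGraph.ofTree t).G →g H) := by
  rw [card_hom_eq_sum, wlMultiset, Multiset.map_map, Finset.sum_eq_multiset_sum]
  apply congrArg Multiset.sum
  apply Multiset.map_congr rfl
  intro v _
  rw [Function.comp_apply, ← homC_eq_lHomC H t k ht v, rc_ofTree]

/-- If two finite simple graphs are distinguished by the Weisfeiler–Leman test, then some
tree has a different number of homomorphisms to the two graphs. -/
theorem wl_distinguished_exists_tree_hom_count_ne
    {V₁ V₂ : Type} [Fintype V₁] [Fintype V₂]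
    (G₁ : SimpleGraph V₁) (G₂ : SimpleGraph V₂)
    [DecidableRel G₁.Adj] [DecidableRel G₂.Adj]
    (h : ∃ k : ℕ, wlMultiset G₁ k ≠ wlMultiset G₂ k) :
    ∃ (n : ℕ) (T : SimpleGraph (Fin n)), T.IsTree ∧
      Nat.card (T →g G₁) ≠ Nat.card (T →g G₂) := by
  by_contra hcon
  push_neg at hcon
  obtain ⟨k, hk⟩ := h
  apply hk
  have hsep : ∀ a b : WLLabel k, a ≠ b →
      ∃ t : RTree, t.depth ≤ k ∧ lHomC t k a ≠ lHomC t k b := by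
    intro a b hab
    by_contra hc
    push_neg at hc
    exact hab (sep_pt k a b hc)
  refine mset_eq hsep _ _ ?_
  intro t ht
  obtain ⟨n, ⟨e⟩⟩ := Finite.exists_equiv_fin (RGraph.ofTree t).V
  let T : SimpleGraph (Fin n) := SimpleGraph.comap (⇑e.symm) (RGraph.ofTree t).G
  have hiso : T ≃g (RGraph.ofTree t).G := ⟨e.symm, Iff.rfl⟩
  have hT : T.IsTree := isTree_of_iso hiso (ofTree_isTree t)
  have hcard := hcon n T hT
  rw [sum_stat_eq_card G₁ t ht, sum_stat_eq_card G₂ t ht,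
    ← Nat.card_congr (homCongr hiso G₁), ← Nat.card_congr (homCongr hiso G₂)]
  exact hcard
end

section
/- If there exists a tree T that has a different number of graph homomorphisms to the finite simple graph G₁ than to the finite simple graph G₂, then G₁ and G₂ are distinguished by the Weisfeiler–Leman test, i.e., for some k the multisets of k-level WL labels of the vertices of G₁ and of G₂ differ. -/
open SimpleGraph
set_option linter.unusedSectionVars false

namespace WLAux

variable {V : Type} [Fintype V] [DecidableEq V] {T : SimpleGraph V}

lemma path_eq (hT : T.IsAcyclic) {a b : V} {p q : T.Walk a b} (hp : p.IsPath) (hq : q.IsPath) :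
    p = q :=
  congrArg Subtype.val (hT.path_unique ⟨p, hp⟩ ⟨q, hq⟩)

lemma concat_isPath {a b c : V} {p : T.Walk a b} (hp : p.IsPath) (h : T.Adj b c)
    (hc : c ∉ p.support) : (p.concat h).IsPath := by
  rw [Walk.isPath_def, Walk.support_concat]
  simp [List.concat_eq_append, List.nodup_append, hp.support_nodup, hc]
  rintro x hx rfl
  exact hc hx

lemma dist_add_dist_le_of_mem {x b : V} (p : T.Walk r b) (hx : x ∈ p.support) :
    T.dist r x + T.dist x b ≤ p.length := by
  have h1 := SimpleGraph.dist_le (p.takeUntil x hx)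
  have h2 := SimpleGraph.dist_le (p.dropUntil x hx)
  have h3 : (p.takeUntil x hx).length + (p.dropUntil x hx).length = p.length := by
    have := congrArg Walk.length (p.take_spec hx)
    rwa [Walk.length_append] at this
  omega

lemma adj_dist_cases (hT : T.IsTree) (r : V) {a b : V} (hab : T.Adj a b) :
    T.dist r b = T.dist r a + 1 ∨ T.dist r a = T.dist r b + 1 := by
  have hd1 : T.dist a b ≤ 1 := SimpleGraph.dist_le (Walk.cons hab Walk.nil)
  have hd2 : T.dist b a ≤ 1 := SimpleGraph.dist_le (Walk.cons hab.symm Walk.nil)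
  have htri1 : T.dist r b ≤ T.dist r a + T.dist a b := hT.isConnected.dist_triangle
  have htri2 : T.dist r a ≤ T.dist r b + T.dist b a := hT.isConnected.dist_triangle
  have hne : T.dist r a ≠ T.dist r b := by
    intro heq
    obtain ⟨p, hp, hlen⟩ := hT.isConnected.exists_path_of_dist r a
    have hbs : b ∉ p.support := by
      intro hx
      have h1 := dist_add_dist_le_of_mem p hx
      have h2 : T.dist b a = 0 := by omega
      have := (hT.isConnected.dist_eq_zero_iff).mp h2
      exact hab.ne' this
    obtain ⟨p', hp', hlen'⟩ := hT.isConnected.exists_path_of_dist r b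
    have hq := concat_isPath hp hab hbs
    have := path_eq hT.IsAcyclic hq hp'
    have hlq := congrArg Walk.length this
    rw [Walk.length_concat] at hlq
    omega
  omega

lemma parent_unique (hT : T.IsTree) (r : V) {a a' b : V} (h : T.Adj a b) (h' : T.Adj a' b)
    (ha : T.dist r a + 1 = T.dist r b) (ha' : T.dist r a' + 1 = T.dist r b) : a = a' := by
  obtain ⟨p, hp, hlen⟩ := hT.isConnected.exists_path_of_dist r a
  obtain ⟨p', hp', hlen'⟩ := hT.isConnected.exists_path_of_dist r a'
  have hbs : b ∉ p.support := by
    intro hx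
    have := dist_add_dist_le_of_mem p hx
    omega
  have hbs' : b ∉ p'.support := by
    intro hx
    have := dist_add_dist_le_of_mem p' hx
    omega
  have heq : p.concat h = p'.concat h' :=
    path_eq hT.IsAcyclic (concat_isPath hp h hbs) (concat_isPath hp' h' hbs')
  have := congrArg Walk.reverse heq
  rw [Walk.reverse_concat, Walk.reverse_concat] at this
  have h2 := congrArg (fun w => Walk.getVert w 1) this
  simpa [Walk.getVert_cons_succ, Walk.getVert_zero] using h2

lemma exists_parent (hT : T.IsTree) (r : V) {u : V} (hu : u ≠ r) :
    ∃ p, T.Adj u p ∧ T.dist r p + 1 = T.dist r u := by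
  obtain ⟨q, hq, hlen⟩ := hT.isConnected.exists_path_of_dist u r
  cases q with
  | nil => exact absurd rfl hu
  | @cons _ x _ h q' =>
    refine ⟨x, h, ?_⟩
    have h1 : T.dist r x ≤ q'.length := by
      rw [SimpleGraph.dist_comm]; exact SimpleGraph.dist_le q'
    have h2 : q'.length + 1 = T.dist r u := by
      rw [SimpleGraph.dist_comm]; simpa using hlen
    have h3 : T.dist r u ≤ T.dist r x + T.dist x u := hT.isConnected.dist_triangle
    have h4 : T.dist x u ≤ 1 := SimpleGraph.dist_le (Walk.cons h.symm Walk.nil)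
    omega


variable (hT : T.IsTree) (r : V)

noncomputable def par (u : V) : V :=
  if h : u = r then r else Classical.choose (exists_parent hT r h)

variable {hT r}

lemma par_r : par hT r r = r := dif_pos rfl

lemma par_adj {u : V} (hu : u ≠ r) : T.Adj u (par hT r u) := by
  rw [par, dif_neg hu]
  exact (Classical.choose_spec (exists_parent hT r hu)).1

lemma dist_par {u : V} (hu : u ≠ r) : T.dist r (par hT r u) + 1 = T.dist r u := by
  rw [par, dif_neg hu]
  exact (Classical.choose_spec (exists_parent hT r hu)).2

include hT in
lemma dist_pos_of_ne {u : V} (hu : u ≠ r) : 0 < T.dist r u := by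
  exact SimpleGraph.Connected.pos_dist_of_ne hT.isConnected (Ne.symm hu)

omit [Fintype V] [DecidableEq V] in
lemma ne_r_of_dist_pos {u : V} (hu : 0 < T.dist r u) : u ≠ r := by
  intro h; subst h; simp [SimpleGraph.dist_self] at hu

lemma adj_eq_par {a b : V} (hab : T.Adj a b) (hd : T.dist r b = T.dist r a + 1) :
    b ≠ r ∧ par hT r b = a := by
  have hbr : b ≠ r := ne_r_of_dist_pos (T := T) (r := r) (by omega)
  refine ⟨hbr, ?_⟩
  exact parent_unique hT r (par_adj hbr).symm hab (dist_par hbr) (by omega)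

lemma adj_par_cases {a b : V} (hab : T.Adj a b) :
    (b ≠ r ∧ par hT r b = a) ∨ (a ≠ r ∧ par hT r a = b) := by
  rcases adj_dist_cases hT r hab with hd | hd
  · exact Or.inl (adj_eq_par hab hd)
  · exact Or.inr (adj_eq_par hab.symm hd)

lemma dist_iterate {u : V} {k : ℕ} (hk : k ≤ T.dist r u) :
    T.dist r ((par hT r)^[k] u) = T.dist r u - k := by
  induction k with
  | zero => simp
  | succ k ih =>
    have ih' := ih (by omega)
    have hne : (par hT r)^[k] u ≠ r := by
      apply ne_r_of_dist_pos (T := T) (r := r)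
      omega
    rw [Function.iterate_succ_apply']
    have := dist_par (hT := hT) hne
    omega

lemma iterate_dist_eq_root (u : V) : (par hT r)^[T.dist r u] u = r := by
  have h := dist_iterate (hT := hT) (r := r) (u := u) (k := T.dist r u) le_rfl
  simp only [Nat.sub_self] at h
  exact ((hT.isConnected.dist_eq_zero_iff).mp h).symm

/-- `w` is a descendant of `u` (relative to root `r`). -/
def IsDesc (u w : V) : Prop :=
  T.dist r u ≤ T.dist r w ∧ (par hT r)^[T.dist r w - T.dist r u] w = u

noncomputable instance : ∀ u w, Decidable (IsDesc (hT := hT) (r := r) u w) := fun _ _ =>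
  Classical.dec _

lemma isDesc_refl (u : V) : IsDesc (hT := hT) (r := r) u u := ⟨le_rfl, by simp⟩

lemma isDesc_root (w : V) : IsDesc (hT := hT) (r := r) r w := by
  constructor
  · simp [SimpleGraph.dist_self]
  · simpa [SimpleGraph.dist_self] using iterate_dist_eq_root (hT := hT) (r := r) w

lemma isDesc_dist_lt {u w : V} (h : IsDesc (hT := hT) (r := r) u w) (hne : w ≠ u) :
    T.dist r u < T.dist r w := by
  rcases Nat.lt_or_ge (T.dist r u) (T.dist r w) with h' | h'
  · exact h'
  · exfalso
    have h2 := h.2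
    have h0 : T.dist r w - T.dist r u = 0 := by omega
    rw [h0] at h2
    exact hne h2

lemma isDesc_par {u w : V} (h : IsDesc (hT := hT) (r := r) u w) (hne : w ≠ u) :
    IsDesc (hT := hT) (r := r) u (par hT r w) := by
  have hlt := isDesc_dist_lt h hne
  have hwr : w ≠ r := ne_r_of_dist_pos (T := T) (r := r) (by omega)
  have hd := dist_par (hT := hT) hwr
  constructor
  · omega
  · have harith : T.dist r w - T.dist r u = (T.dist r (par hT r w) - T.dist r u) + 1 := by omega
    have := h.2
    rw [harith, Function.iterate_succ_apply] at this
    exact this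

lemma isDesc_trans {u c w : V} (h1 : IsDesc (hT := hT) (r := r) u c)
    (h2 : IsDesc (hT := hT) (r := r) c w) : IsDesc (hT := hT) (r := r) u w := by
  refine ⟨le_trans h1.1 h2.1, ?_⟩
  have harith : T.dist r w - T.dist r u
      = (T.dist r c - T.dist r u) + (T.dist r w - T.dist r c) := by
    have := h1.1; have := h2.1; omega
  rw [harith, Function.iterate_add_apply, h2.2, h1.2]

/-- The child of `u` through which descendant `w` hangs. -/
noncomputable def childOf (u w : V) : V :=
  (par hT r)^[T.dist r w - T.dist r u - 1] w

variable {u w : V}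

lemma childOf_dist (h : IsDesc (hT := hT) (r := r) u w) (hne : w ≠ u) :
    T.dist r (childOf (hT := hT) (r := r) u w) = T.dist r u + 1 := by
  have hlt := isDesc_dist_lt h hne
  rw [childOf, dist_iterate (by omega)]
  omega

lemma childOf_par (h : IsDesc (hT := hT) (r := r) u w) (hne : w ≠ u) :
    par hT r (childOf (hT := hT) (r := r) u w) = u := by
  have hlt := isDesc_dist_lt h hne
  have : par hT r (childOf (hT := hT) (r := r) u w)
      = (par hT r)^[(T.dist r w - T.dist r u - 1) + 1] w := by
    rw [Function.iterate_succ_apply', childOf]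
  rw [this]
  have harith : (T.dist r w - T.dist r u - 1) + 1 = T.dist r w - T.dist r u := by omega
  rw [harith]
  exact h.2

lemma childOf_isDesc (h : IsDesc (hT := hT) (r := r) u w) (hne : w ≠ u) :
    IsDesc (hT := hT) (r := r) (childOf (hT := hT) (r := r) u w) w := by
  have hlt := isDesc_dist_lt h hne
  have hd := childOf_dist h hne
  refine ⟨by omega, ?_⟩
  rw [hd]
  have : T.dist r w - (T.dist r u + 1) = T.dist r w - T.dist r u - 1 := by omega
  rw [this]
  rfl

lemma childOf_eq_self (h : T.dist r w = T.dist r u + 1) :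
    childOf (hT := hT) (r := r) u w = w := by
  rw [childOf, h]
  simp

lemma childOf_unique {c : V} (hc : T.dist r c = T.dist r u + 1)
    (h : IsDesc (hT := hT) (r := r) c w) : childOf (hT := hT) (r := r) u w = c := by
  have := h.2
  rw [childOf]
  have harith : T.dist r w - T.dist r u - 1 = T.dist r w - T.dist r c := by
    have := h.1; omega
  rw [harith]
  exact h.2

lemma childOf_par_eq (h : IsDesc (hT := hT) (r := r) u w) (hne : w ≠ u)
    (hpar : par hT r w ≠ u) :
    childOf (hT := hT) (r := r) u (par hT r w) = childOf (hT := hT) (r := r) u w := by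
  have hlt := isDesc_dist_lt h hne
  have hwr : w ≠ r := ne_r_of_dist_pos (T := T) (r := r) (by omega)
  have hd := dist_par (hT := hT) hwr
  have hdesc := isDesc_par h hne
  have hlt2 := isDesc_dist_lt hdesc (by intro he; exact hpar he)
  rw [childOf, childOf]
  have harith : T.dist r w - T.dist r u - 1
      = (T.dist r (par hT r w) - T.dist r u - 1) + 1 := by omega
  rw [harith, Function.iterate_succ_apply]

variable (hT r) in
/-- The children of a vertex. -/
noncomputable def children (u : V) : Finset V :=
  Finset.univ.filter (fun c => c ≠ r ∧ par hT r c = u)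

lemma mem_children {c u : V} :
    c ∈ children hT r u ↔ c ≠ r ∧ par hT r c = u := by
  simp [children]

lemma children_dist {c u : V} (hc : c ∈ children hT r u) :
    T.dist r c = T.dist r u + 1 := by
  rw [mem_children] at hc
  have := dist_par (hT := hT) hc.1
  rw [hc.2] at this
  omega

lemma children_isDesc {c u : V} (hc : c ∈ children hT r u) :
    IsDesc (hT := hT) (r := r) u c := by
  have hd := children_dist hc
  rw [mem_children] at hc
  refine ⟨by omega, ?_⟩
  have : T.dist r c - T.dist r u = 1 := by omega
  rw [this]
  simpa using hc.2

lemma children_ne {c u : V} (hc : c ∈ children hT r u) : c ≠ u := by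
  have := children_dist hc
  intro h; subst h; omega

lemma childOf_mem_children (h : IsDesc (hT := hT) (r := r) u w) (hne : w ≠ u) :
    childOf (hT := hT) (r := r) u w ∈ children hT r u := by
  rw [mem_children]
  refine ⟨?_, childOf_par h hne⟩
  apply ne_r_of_dist_pos (T := T) (r := r)
  rw [childOf_dist h hne]
  omega

section Counting

variable {W : Type} [Fintype W]

/-- `f` behaves like a homomorphism on the subtree below `u`, sends `u` to `v`,
and is constantly `v` outside the subtree. -/
def Good (hT : T.IsTree) (r : V) (G : SimpleGraph W) (u : V) (v : W) (f : V → W) : Prop :=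
  f u = v ∧ (∀ w, IsDesc (hT := hT) (r := r) u w → w ≠ u → G.Adj (f (par hT r w)) (f w)) ∧
    (∀ w, ¬ IsDesc (hT := hT) (r := r) u w → f w = v)

def Sub (hT : T.IsTree) (r : V) (G : SimpleGraph W) (u : V) (v : W) : Type :=
  {f : V → W // Good hT r G u v f}

def Tgt (hT : T.IsTree) (r : V) (G : SimpleGraph W) (v : W) (c : V) : Type :=
  {p : W × (V → W) // G.Adj v p.1 ∧ Good hT r G c p.1 p.2}

instance (hT : T.IsTree) (r : V) (G : SimpleGraph W) (u : V) (v : W) :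
    Finite (Sub hT r G u v) :=
  Subtype.finite

instance (hT : T.IsTree) (r : V) (G : SimpleGraph W) (v : W) (c : V) :
    Finite (Tgt hT r G v c) :=
  Subtype.finite

/-- Homomorphisms are exactly pairs `(v, f)` with `f` good for the root. -/
def homEquiv (hT : T.IsTree) (r : V) (G : SimpleGraph W) :
    (T →g G) ≃ {p : W × (V → W) // Good hT r G r p.1 p.2} where
  toFun f := ⟨(f r, f), rfl,
    fun w _ hw => (f.map_adj (par_adj (hT := hT) hw)).symm,
    fun w hw => absurd (isDesc_root (hT := hT) (r := r) w) hw⟩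
  invFun F := ⟨F.1.2, by
    intro a b hab
    rcases adj_par_cases (hT := hT) (r := r) hab with ⟨hbr, hpar⟩ | ⟨har, hpar⟩
    · have := F.2.2.1 b (isDesc_root (hT := hT) (r := r) b) hbr
      rwa [hpar] at this
    · have := F.2.2.1 a (isDesc_root (hT := hT) (r := r) a) har
      rw [hpar] at this
      exact this.symm⟩
  left_inv f := rfl
  right_inv F := by
    obtain ⟨⟨v, f⟩, hf⟩ := F
    exact Subtype.ext (Prod.ext (hf.1) rfl)

def rootSigmaEquiv (hT : T.IsTree) (r : V) (G : SimpleGraph W) :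
    {p : W × (V → W) // Good hT r G r p.1 p.2} ≃ Σ v : W, Sub hT r G r v where
  toFun p := ⟨p.1.1, ⟨p.1.2, p.2⟩⟩
  invFun s := ⟨(s.1, s.2.1), s.2.2⟩
  left_inv _ := rfl
  right_inv _ := rfl

def tgtSigmaEquiv (hT : T.IsTree) (r : V) (G : SimpleGraph W) [DecidableRel G.Adj]
    (v : W) (c : V) :
    Tgt hT r G v c ≃ Σ w : {w // w ∈ G.neighborFinset v}, Sub hT r G c w.1 where
  toFun p := ⟨⟨p.1.1, (SimpleGraph.mem_neighborFinset G v p.1.1).mpr p.2.1⟩, ⟨p.1.2, p.2.2⟩⟩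
  invFun s := ⟨(s.1.1, s.2.1), (SimpleGraph.mem_neighborFinset G v s.1.1).mp s.1.2, s.2.2⟩
  left_inv _ := rfl
  right_inv _ := rfl

lemma F_snd_apply_eq {hT : T.IsTree} {r : V} {G : SimpleGraph W} {u : V} {v : W}
    (F : ∀ c : {c // c ∈ children hT r u}, Tgt hT r G v c.1)
    {a b : V} {ha : a ∈ children hT r u} {hb : b ∈ children hT r u} (h : a = b) (x : V) :
    (F ⟨a, ha⟩).1.2 x = (F ⟨b, hb⟩).1.2 x := by subst h; rfl

/-- The key recursive structure: a good function for `u ↦ v` is the same as a choice,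
for each child `c` of `u`, of a neighbor `w` of `v` and a good function for `c ↦ w`. -/
noncomputable def mainEquiv (hT : T.IsTree) (r : V) (G : SimpleGraph W) (u : V) (v : W) :
    Sub hT r G u v ≃ ∀ c : {c // c ∈ children hT r u}, Tgt hT r G v c.1 where
  toFun f c := by
    refine ⟨(f.1 c.1, fun x => if IsDesc (hT := hT) (r := r) c.1 x then f.1 x else f.1 c.1),
      ?_, ?_, ?_, ?_⟩
    · -- adjacency
      have := f.2.2.1 c.1 (children_isDesc c.2) (children_ne c.2)
      rw [(mem_children.mp c.2).2, f.2.1] at this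
      exact this
    · dsimp only
      rw [if_pos (isDesc_refl (hT := hT) (r := r) c.1)]
    · intro x hx hxc
      dsimp only
      rw [if_pos hx, if_pos (isDesc_par hx hxc)]
      exact f.2.2.1 x (isDesc_trans (children_isDesc c.2) hx)
        (by
          have h1 := isDesc_dist_lt hx hxc
          have h2 := children_dist c.2
          intro h; subst h; omega)
    · intro x hx
      dsimp only
      rw [if_neg hx]
  invFun F := by
    refine ⟨fun x => if h : IsDesc (hT := hT) (r := r) u x ∧ x ≠ u
      then (F ⟨childOf (hT := hT) (r := r) u x, childOf_mem_children h.1 h.2⟩).1.2 x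
      else v, ?_, ?_, ?_⟩
    · dsimp only
      rw [dif_neg (show ¬(IsDesc (hT := hT) (r := r) u u ∧ u ≠ u) by simp)]
    · intro x hx hxu
      have hxlt := isDesc_dist_lt hx hxu
      dsimp only
      by_cases hpx : par hT r x = u
      · -- `x` is itself a child of `u`
        have hxr : x ≠ r := ne_r_of_dist_pos (T := T) (r := r) (by omega)
        have hdx : T.dist r x = T.dist r u + 1 := by
          have := dist_par (hT := hT) hxr; rw [hpx] at this; omega
        have hcx : childOf (hT := hT) (r := r) u x = x := childOf_eq_self hdx
        have hmem : x ∈ children hT r u := by rw [mem_children]; exact ⟨hxr, hpx⟩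
        rw [hpx]
        rw [dif_neg (show ¬(IsDesc (hT := hT) (r := r) u u ∧ u ≠ u) by simp)]
        rw [dif_pos (show IsDesc (hT := hT) (r := r) u x ∧ x ≠ u from ⟨hx, hxu⟩)]
        rw [F_snd_apply_eq F (hb := hmem) hcx x]
        have h1 : (F ⟨x, hmem⟩).1.2 x = (F ⟨x, hmem⟩).1.1 := (F ⟨x, hmem⟩).2.2.1
        rw [h1]
        exact (F ⟨x, hmem⟩).2.1
      · -- `par x` is still a proper descendant
        have hdpar : IsDesc (hT := hT) (r := r) u (par hT r x) := isDesc_par hx hxu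
        have hpxu : (par hT r x) ≠ u := hpx
        have hco : childOf (hT := hT) (r := r) u (par hT r x)
            = childOf (hT := hT) (r := r) u x := childOf_par_eq hx hxu hpx
        rw [dif_pos (show IsDesc (hT := hT) (r := r) u (par hT r x) ∧ (par hT r x) ≠ u from
          ⟨hdpar, hpxu⟩)]
        rw [dif_pos (show IsDesc (hT := hT) (r := r) u x ∧ x ≠ u from ⟨hx, hxu⟩)]
        rw [F_snd_apply_eq F (hb := childOf_mem_children hx hxu) hco (par hT r x)]
        have hdescx : IsDesc (hT := hT) (r := r) (childOf (hT := hT) (r := r) u x) x :=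
          childOf_isDesc hx hxu
        have hxnec : x ≠ childOf (hT := hT) (r := r) u x := by
          intro h
          apply hpx
          rw [h]
          exact childOf_par hx hxu
        exact (F ⟨childOf (hT := hT) (r := r) u x,
          childOf_mem_children hx hxu⟩).2.2.2.1 x hdescx hxnec
    · intro x hx
      dsimp only
      rw [dif_neg (show ¬(IsDesc (hT := hT) (r := r) u x ∧ x ≠ u) from fun hh => hx hh.1)]
  left_inv f := by
    apply Subtype.ext
    funext x
    dsimp only
    by_cases h : IsDesc (hT := hT) (r := r) u x ∧ x ≠ u
    · rw [dif_pos h, if_pos (childOf_isDesc h.1 h.2)]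
    · rw [dif_neg h]
      rcases Classical.em (x = u) with he | he
      · rw [he, f.2.1]
      · have : ¬ IsDesc (hT := hT) (r := r) u x := fun hd => h ⟨hd, he⟩
        exact (f.2.2.2 x this).symm
  right_inv F := by
    funext c
    obtain ⟨c, hc⟩ := c
    apply Subtype.ext
    have hcd : IsDesc (hT := hT) (r := r) u c := children_isDesc hc
    have hcne : c ≠ u := children_ne hc
    have hdistc : T.dist r c = T.dist r u + 1 := children_dist hc
    dsimp only
    refine Prod.ext ?_ ?_
    · dsimp only
      rw [dif_pos (show IsDesc (hT := hT) (r := r) u c ∧ c ≠ u from ⟨hcd, hcne⟩)]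
      rw [F_snd_apply_eq F (hb := hc) (childOf_eq_self hdistc) c]
      exact (F ⟨c, hc⟩).2.2.1
    · funext x
      dsimp only
      by_cases hdx : IsDesc (hT := hT) (r := r) c x
      · rw [if_pos hdx]
        have hux : IsDesc (hT := hT) (r := r) u x := isDesc_trans hcd hdx
        have hxu : x ≠ u := by
          intro h; subst h
          rcases Classical.em (x = c) with he | he
          · exact hcne he.symm
          · have := isDesc_dist_lt hdx he; omega
        rw [dif_pos (show IsDesc (hT := hT) (r := r) u x ∧ x ≠ u from ⟨hux, hxu⟩)]
        rw [F_snd_apply_eq F (hb := hc) (childOf_unique (hT := hT) (r := r) hdistc hdx) x]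
      · rw [if_neg hdx, dif_pos (show IsDesc (hT := hT) (r := r) u c ∧ c ≠ u from ⟨hcd, hcne⟩)]
        rw [F_snd_apply_eq F (hb := hc) (childOf_eq_self hdistc) c]
        exact ((F ⟨c, hc⟩).2.2.1).trans ((F ⟨c, hc⟩).2.2.2.2 x hdx).symm

end Counting

section Phi

variable {W : Type} [Fintype W]

/-- The number of good maps `u ↦ v`, computed from the WL label of `v` alone. -/
noncomputable def phi (hT : T.IsTree) (r : V) : (k : ℕ) → V → WLLabel k → ℕ
  | 0, _, _ => 1
  | k + 1, u, ℓ => ∏ c ∈ children hT r u,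
      (Multiset.map (phi hT r k c) (ℓ : Multiset (WLLabel k))).sum

lemma natCard_sigma {ι : Type} [Fintype ι] (α : ι → Type) [∀ i, Finite (α i)] :
    Nat.card (Σ i, α i) = ∑ i, Nat.card (α i) := by
  haveI : ∀ i, Fintype (α i) := fun i => Fintype.ofFinite _
  simp [Nat.card_eq_fintype_card]

lemma card_tgt (hT : T.IsTree) (r : V) (G : SimpleGraph W) [DecidableRel G.Adj] (v : W)
    (c : V) :
    Nat.card (Tgt hT r G v c) = ∑ w ∈ G.neighborFinset v, Nat.card (Sub hT r G c w) := by
  exact (Nat.card_congr (tgtSigmaEquiv hT r G v c)).trans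
    ((natCard_sigma (fun w : {w // w ∈ G.neighborFinset v} => Sub hT r G c w.1)).trans
      (Finset.sum_coe_sort (G.neighborFinset v) (fun w => Nat.card (Sub hT r G c w))))

lemma card_sub_rec (hT : T.IsTree) (r : V) (G : SimpleGraph W) [DecidableRel G.Adj]
    (u : V) (v : W) :
    Nat.card (Sub hT r G u v)
      = ∏ c ∈ children hT r u, ∑ w ∈ G.neighborFinset v, Nat.card (Sub hT r G c w) := by
  have h1 : ∏ c : {c // c ∈ children hT r u}, Nat.card (Tgt hT r G v c.1)
      = ∏ c : {c // c ∈ children hT r u},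
        ∑ w ∈ G.neighborFinset v, Nat.card (Sub hT r G c.1 w) :=
    Finset.prod_congr rfl fun c _ => card_tgt hT r G v c.1
  exact (Nat.card_congr (mainEquiv hT r G u v)).trans
    ((Nat.card_pi (β := fun c : {c // c ∈ children hT r u} => Tgt hT r G v c.1)).trans
      (h1.trans (Finset.prod_coe_sort (children hT r u) (fun c => ∑ w ∈ G.neighborFinset v, Nat.card (Sub hT r G c w)))))

lemma dist_lt_card (hT : T.IsTree) (r u : V) : T.dist r u < Fintype.card V := by
  obtain ⟨p, hp, hlen⟩ := hT.isConnected.exists_path_of_dist r u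
  rw [← hlen]
  exact hp.length_lt

lemma card_sub_eq_phi (hT : T.IsTree) (r : V) (G : SimpleGraph W) [DecidableRel G.Adj] :
    ∀ (k : ℕ) (u : V) (v : W), Fintype.card V ≤ T.dist r u + k →
      Nat.card (Sub hT r G u v) = phi hT r k u (wlLabel G k v) := by
  intro k
  induction k with
  | zero =>
    intro u v hk
    exact absurd hk (by have := dist_lt_card hT r u; omega)
  | succ k ih =>
    intro u v hk
    rw [card_sub_rec]
    rw [show phi hT r (k + 1) u (wlLabel G (k + 1) v) = ∏ c ∈ children hT r u,
      (Multiset.map (phi hT r k c) ((G.neighborFinset v).val.map (wlLabel G k))).sum from rfl]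
    refine Finset.prod_congr rfl fun c hc => ?_
    rw [Multiset.map_map]
    have hsum : ∑ w ∈ G.neighborFinset v, Nat.card (Sub hT r G c w)
        = ∑ w ∈ G.neighborFinset v, phi hT r k c (wlLabel G k w) :=
      Finset.sum_congr rfl fun w _ => ih c w (by have := children_dist hc; omega)
    rw [hsum]
    rfl

lemma hom_card (hT : T.IsTree) (r : V) (G : SimpleGraph W) [DecidableRel G.Adj] :
    Nat.card (T →g G)
      = ((wlMultiset G (Fintype.card V)).map (phi hT r (Fintype.card V) r)).sum := by
  rw [Nat.card_congr ((homEquiv hT r G).trans (rootSigmaEquiv hT r G)),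
    natCard_sigma (fun v : W => Sub hT r G r v)]
  have hstep : ∀ v : W, Nat.card (Sub hT r G r v)
      = phi hT r (Fintype.card V) r (wlLabel G (Fintype.card V) v) := fun v =>
    card_sub_eq_phi hT r G (Fintype.card V) r v (by simp [SimpleGraph.dist_self])
  rw [Finset.sum_congr rfl (fun v _ => hstep v)]
  rw [wlMultiset, Multiset.map_map]
  rfl

end Phi

end WLAux

/-- If some tree has a different number of homomorphisms to `G₁` than to `G₂`, then
`G₁` and `G₂` are distinguished by the Weisfeiler–Leman test. -/
theorem exists_tree_hom_count_ne_wl_distinguished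
    {V₁ V₂ : Type} [Fintype V₁] [Fintype V₂]
    (G₁ : SimpleGraph V₁) (G₂ : SimpleGraph V₂)
    [DecidableRel G₁.Adj] [DecidableRel G₂.Adj]
    (h : ∃ (n : ℕ) (T : SimpleGraph (Fin n)), T.IsTree ∧
      Nat.card (T →g G₁) ≠ Nat.card (T →g G₂)) :
    ∃ k : ℕ, wlMultiset G₁ k ≠ wlMultiset G₂ k := by
  by_contra hc
  push_neg at hc
  obtain ⟨n, T, hTree, hne⟩ := h
  haveI : Nonempty (Fin n) := hTree.isConnected.nonempty
  obtain ⟨r⟩ := ‹Nonempty (Fin n)›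
  apply hne
  rw [WLAux.hom_card hTree r G₁, WLAux.hom_card hTree r G₂, hc (Fintype.card (Fin n))]
end

section
/- Let G₁ and G₂ be finite simple graphs, u₁ a vertex of G₁ and u₂ a vertex of G₂ with equal k-level WL labels: ℓ_k^{G₁}(u₁) = ℓ_k^{G₂}(u₂). Then for every rooted tree (T, r) of depth at most k, the number of homomorphisms from T to G₁ mapping r to u₁ equals the number of homomorphisms from T to G₂ mapping r to u₂. -/
open SimpleGraph Walk

namespace WLProof

variable {W : Type} {T : SimpleGraph W}

lemma path_unique (hT : T.IsTree) {a b : W} {p q : T.Walk a b}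
    (hp : p.IsPath) (hq : q.IsPath) : p = q :=
  (hT.existsUnique_path a b).unique hp hq

lemma adj_dist_ne (hT : T.IsTree) {a b : W} (hab : T.Adj a b) (r : W) :
    T.dist r a ≠ T.dist r b := by
  classical
  intro hd
  obtain ⟨p, hp, hl⟩ := hT.isConnected.exists_path_of_dist r a
  by_cases hb : b ∈ p.support
  · have h1 := SimpleGraph.dist_le (p.takeUntil b hb)
    have h2 : (p.takeUntil b hb).length + (p.dropUntil b hb).length = p.length := by
      rw [← Walk.length_append, Walk.take_spec]
    have h4 : (p.dropUntil b hb).length = 0 := by omega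
    exact hab.ne' (Walk.eq_of_length_eq_zero h4)
  · have hq : (p.concat hab).IsPath := by
      rw [← isPath_reverse_iff, Walk.reverse_concat]
      exact hp.reverse.cons (by simpa using hb)
    obtain ⟨p', hp', hl'⟩ := hT.isConnected.exists_path_of_dist r b
    have heq := path_unique hT hq hp'
    have hlen : (p.concat hab).length = p'.length := by rw [heq]
    rw [Walk.length_concat, hl, hl', hd] at hlen
    omega

lemma adj_dist_cases (hT : T.IsTree) {a b : W} (hab : T.Adj a b) (r : W) :
    T.dist r b = T.dist r a + 1 ∨ T.dist r a = T.dist r b + 1 := by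
  have h1 : T.dist r b ≤ T.dist r a + T.dist a b := hT.isConnected.dist_triangle
  have h2 : T.dist r a ≤ T.dist r b + T.dist b a := hT.isConnected.dist_triangle
  have h3 : T.dist a b = 1 := dist_eq_one_iff_adj.2 hab
  have h4 : T.dist b a = 1 := dist_eq_one_iff_adj.2 hab.symm
  have h5 := adj_dist_ne hT hab r
  omega

lemma parent_unique (hT : T.IsTree) {r w a b : W} (haw : T.Adj a w) (hbw : T.Adj b w)
    (hda : T.dist r a + 1 = T.dist r w) (hdb : T.dist r b + 1 = T.dist r w) : a = b := by
  classical
  obtain ⟨pa, hpa, hla⟩ := hT.isConnected.exists_path_of_dist r a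
  obtain ⟨pb, hpb, hlb⟩ := hT.isConnected.exists_path_of_dist r b
  have hwa : w ∉ pa.support := fun h => by
    have h1 := SimpleGraph.dist_le (pa.takeUntil w h)
    have h2 := Walk.length_takeUntil_le pa h
    omega
  have hwb : w ∉ pb.support := fun h => by
    have h1 := SimpleGraph.dist_le (pb.takeUntil w h)
    have h2 := Walk.length_takeUntil_le pb h
    omega
  have hqa : (pa.concat haw).IsPath := by
    rw [← isPath_reverse_iff, Walk.reverse_concat]
    exact hpa.reverse.cons (by simpa using hwa)
  have hqb : (pb.concat hbw).IsPath := by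
    rw [← isPath_reverse_iff, Walk.reverse_concat]
    exact hpb.reverse.cons (by simpa using hwb)
  have heq := path_unique hT hqa hqb
  have := congrArg (fun q : T.Walk r w => q.reverse.getVert 1) heq
  simpa [Walk.reverse_concat, Walk.getVert_cons_succ] using this

lemma parent_exists (hT : T.IsTree) {r w : W} (hw : w ≠ r) :
    ∃ a, T.Adj a w ∧ T.dist r a + 1 = T.dist r w := by
  obtain ⟨p, hp, hl⟩ := hT.isConnected.exists_path_of_dist r w
  obtain ⟨a, h, q, hpq⟩ := Walk.exists_eq_cons_of_ne hw p.reverse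
  have hq : q.length + 1 = p.length := by
    have := congrArg Walk.length hpq
    simpa [Nat.add_comm] using this.symm
  have h1 : T.dist r a ≤ q.reverse.length := SimpleGraph.dist_le _
  rw [Walk.length_reverse] at h1
  have h2 : T.dist r w ≤ T.dist r a + T.dist a w := hT.isConnected.dist_triangle
  have h3 : T.dist a w = 1 := dist_eq_one_iff_adj.2 h.symm
  have h4 : 0 < T.dist r w := hT.isConnected.pos_dist_of_ne (Ne.symm hw)
  exact ⟨a, h.symm, by omega⟩


/-- The set of vertices in the subtree hanging below neighbor `c` of the root `r`. -/
def sub (T : SimpleGraph W) (r c : W) : Set W := {w | T.dist r w = T.dist c w + 1}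

lemma mem_sub_self {r c : W} (h : T.Adj r c) : c ∈ sub T r c := by
  simp only [sub, Set.mem_setOf_eq, SimpleGraph.dist_self]
  exact SimpleGraph.dist_eq_one_iff_adj.2 h

lemma root_not_mem_sub {r c : W} : r ∉ sub T r c := by
  simp [sub, SimpleGraph.dist_self]

lemma subparent (hT : T.IsTree) {r c w : W} (hrc : T.Adj r c) (hw : w ∈ sub T r c)
    (hwc : w ≠ c) : ∃ b, T.Adj b w ∧ T.dist r b + 1 = T.dist r w ∧ b ∈ sub T r c := by
  obtain ⟨b, hbw, hdb⟩ := parent_exists hT (r := c) hwc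
  have h1 : T.dist r b ≤ T.dist r c + T.dist c b := hT.isConnected.dist_triangle
  have h2 : T.dist r w ≤ T.dist r b + T.dist b w := hT.isConnected.dist_triangle
  have hbw1 : T.dist b w = 1 := dist_eq_one_iff_adj.2 hbw
  have hrc1 : T.dist r c = 1 := dist_eq_one_iff_adj.2 hrc
  have hw' : T.dist r w = T.dist c w + 1 := hw
  have h3 : T.dist r w ≤ T.dist r b + 1 := by omega
  refine ⟨b, hbw, by omega, ?_⟩
  show T.dist r b = T.dist c b + 1
  omega

lemma parent_mem_sub (hT : T.IsTree) {r c a b : W} (hrc : T.Adj r c) (ha : a ∈ sub T r c)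
    (hac : a ≠ c) (hba : T.Adj b a) (hdb : T.dist r b + 1 = T.dist r a) : b ∈ sub T r c := by
  obtain ⟨b', hb'a, hdb', hb'⟩ := subparent hT hrc ha hac
  rwa [parent_unique hT hba hb'a hdb hdb']

lemma child_mem_sub (hT : T.IsTree) {r c a b : W} (hrc : T.Adj r c) (ha : a ∈ sub T r c)
    (hab : T.Adj a b) (hdb : T.dist r b = T.dist r a + 1) : b ∈ sub T r c := by
  have h1 : T.dist c b ≤ T.dist c a + T.dist a b := hT.isConnected.dist_triangle
  have h2 : T.dist r b ≤ T.dist r c + T.dist c b := hT.isConnected.dist_triangle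
  have h3 : T.dist a b = 1 := dist_eq_one_iff_adj.2 hab
  have hrc1 : T.dist r c = 1 := dist_eq_one_iff_adj.2 hrc
  have ha' : T.dist r a = T.dist c a + 1 := ha
  show T.dist r b = T.dist c b + 1
  omega

lemma cross_edge (hT : T.IsTree) {r c a b : W} (hrc : T.Adj r c) (ha : a ∈ sub T r c)
    (hab : T.Adj a b) (hb : b ∉ sub T r c) : b = r := by
  rcases adj_dist_cases hT hab r with h | h
  · exact absurd (child_mem_sub hT hrc ha hab h) hb
  · by_cases hac : a = c
    · subst hac
      have hrc1 : T.dist r a = 1 := dist_eq_one_iff_adj.2 hrc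
      have : T.dist r b = 0 := by omega
      exact (hT.isConnected.dist_eq_zero_iff.1 this).symm
    · exact absurd (parent_mem_sub hT hrc ha hac hab.symm (by omega)) hb

lemma exists_sub (hT : T.IsTree) {r : W} :
    ∀ (n : ℕ) {w : W}, T.dist r w = n → w ≠ r → ∃ c, T.Adj r c ∧ w ∈ sub T r c := by
  intro n
  induction n using Nat.strong_induction_on with
  | _ n ih =>
    intro w hn hw
    rcases Nat.eq_zero_or_pos n with h0 | hpos
    · subst h0
      exact absurd (hT.isConnected.dist_eq_zero_iff.1 hn).symm hw
    rcases Nat.lt_or_ge 1 n with h2 | h1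
    · obtain ⟨b, hbw, hdb⟩ := parent_exists hT hw
      have hbr : b ≠ r := by
        intro hbr; subst hbr
        rw [SimpleGraph.dist_self] at hdb
        omega
      obtain ⟨c, hc, hbc⟩ := ih (n - 1) (by omega) (by omega) hbr
      exact ⟨c, hc, child_mem_sub hT hc hbc hbw (by omega)⟩
    · have hn1 : T.dist r w = 1 := by omega
      have : T.Adj r w := dist_eq_one_iff_adj.1 hn1
      exact ⟨w, this, mem_sub_self this⟩

lemma sub_unique (hT : T.IsTree) {r : W} :
    ∀ (n : ℕ) {w c c' : W}, T.dist r w = n → T.Adj r c → T.Adj r c' →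
      w ∈ sub T r c → w ∈ sub T r c' → c = c' := by
  intro n
  induction n using Nat.strong_induction_on with
  | _ n ih =>
    intro w c c' hn hc hc' hw hw'
    by_cases hwc : w = c
    · subst hwc
      have h1 : T.dist r w = 1 := dist_eq_one_iff_adj.2 hc
      have h2 : T.dist r w = T.dist c' w + 1 := hw'
      have : T.dist c' w = 0 := by omega
      exact (hT.isConnected.dist_eq_zero_iff.1 this).symm
    by_cases hwc' : w = c'
    · subst hwc'
      have h1 : T.dist r w = 1 := dist_eq_one_iff_adj.2 hc'
      have h2 : T.dist r w = T.dist c w + 1 := hw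
      have : T.dist c w = 0 := by omega
      exact hT.isConnected.dist_eq_zero_iff.1 this
    obtain ⟨b, hbw, hdb, hb⟩ := subparent hT hc hw hwc
    obtain ⟨b', hb'w, hdb', hb'⟩ := subparent hT hc' hw' hwc'
    have hbb' : b = b' := parent_unique hT hbw hb'w hdb hdb'
    subst hbb'
    have hwr : w ≠ r := fun h => root_not_mem_sub (h ▸ hw)
    have hpos : 0 < n := hn ▸ hT.isConnected.pos_dist_of_ne (Ne.symm hwr)
    exact ih (n - 1) (by omega) (by omega) hc hc' hb hb'


lemma on_shortest_mem_sub (hT : T.IsTree) {r c w x : W} (hrc : T.Adj r c)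
    (hw : w ∈ sub T r c) (p : T.Walk c w) (hp : p.length = T.dist c w)
    (hx : x ∈ p.support) : x ∈ sub T r c := by
  classical
  have h1 : T.dist c x ≤ (p.takeUntil x hx).length := SimpleGraph.dist_le _
  have h2 : T.dist x w ≤ (p.dropUntil x hx).length := SimpleGraph.dist_le _
  have h3 : (p.takeUntil x hx).length + (p.dropUntil x hx).length = p.length := by
    rw [← Walk.length_append, Walk.take_spec]
  have h4 : T.dist c w ≤ T.dist c x + T.dist x w := hT.isConnected.dist_triangle
  have h5 : T.dist r x ≤ T.dist r c + T.dist c x := hT.isConnected.dist_triangle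
  have h6 : T.dist r w ≤ T.dist r x + T.dist x w := hT.isConnected.dist_triangle
  have hrc1 : T.dist r c = 1 := dist_eq_one_iff_adj.2 hrc
  have hw' : T.dist r w = T.dist c w + 1 := hw
  show T.dist r x = T.dist c x + 1
  omega

lemma walk_induce {S : Set W} {a b : W} (p : T.Walk a b) (hs : ∀ x ∈ p.support, x ∈ S)
    (ha : a ∈ S) (hb : b ∈ S) :
    ∃ q : (T.induce S).Walk ⟨a, ha⟩ ⟨b, hb⟩, q.length = p.length := by
  induction p with
  | nil => exact ⟨Walk.nil, rfl⟩
  | @cons a a' b h p ih =>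
    have ha' : a' ∈ S := hs a' (by simp)
    obtain ⟨q, hq⟩ := ih (fun x hx => hs x (by simp [hx])) ha' hb
    exact ⟨Walk.cons (show (T.induce S).Adj ⟨a, ha⟩ ⟨a', ha'⟩ by exact h) q, by simp [hq]⟩

lemma sub_reachable (hT : T.IsTree) {r c : W} (hrc : T.Adj r c) {w : W} (hw : w ∈ sub T r c) :
    ∃ q : (T.induce (sub T r c)).Walk ⟨c, mem_sub_self hrc⟩ ⟨w, hw⟩, q.length = T.dist c w := by
  obtain ⟨p, hp, hl⟩ := hT.isConnected.exists_path_of_dist c w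
  obtain ⟨q, hq⟩ := walk_induce p (fun x hx => on_shortest_mem_sub hT hrc hw p hl hx)
    (mem_sub_self hrc) hw
  exact ⟨q, by rw [hq, hl]⟩

lemma sub_isTree (hT : T.IsTree) {r c : W} (hrc : T.Adj r c) :
    (T.induce (sub T r c)).IsTree := by
  constructor
  · rw [SimpleGraph.connected_iff]
    refine ⟨?_, ⟨⟨c, mem_sub_self hrc⟩⟩⟩
    intro x y
    obtain ⟨x, hx⟩ := x
    obtain ⟨y, hy⟩ := y
    obtain ⟨qx, -⟩ := sub_reachable hT hrc hx
    obtain ⟨qy, -⟩ := sub_reachable hT hrc hy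
    exact (Walk.reachable qx).symm.trans (Walk.reachable qy)
  · intro x q hq
    have := hq.map (f := (SimpleGraph.Embedding.induce (sub T r c)).toHom)
      Subtype.val_injective
    exact hT.IsAcyclic _ this

lemma sub_dist_le (hT : T.IsTree) {r c : W} (hrc : T.Adj r c) {w : W} (hw : w ∈ sub T r c) :
    (T.induce (sub T r c)).dist ⟨c, mem_sub_self hrc⟩ ⟨w, hw⟩ ≤ T.dist c w := by
  obtain ⟨q, hq⟩ := sub_reachable hT hrc hw
  exact hq ▸ SimpleGraph.dist_le q


noncomputable def pick (hT : T.IsTree) (r w : W) (hw : w ≠ r) : W :=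
  (exists_sub hT (T.dist r w) rfl hw).choose

lemma pick_adj (hT : T.IsTree) (r w : W) (hw : w ≠ r) : T.Adj r (pick hT r w hw) :=
  (exists_sub hT (T.dist r w) rfl hw).choose_spec.1

lemma pick_mem (hT : T.IsTree) (r w : W) (hw : w ≠ r) : w ∈ sub T r (pick hT r w hw) :=
  (exists_sub hT (T.dist r w) rfl hw).choose_spec.2

lemma pick_eq (hT : T.IsTree) {r c w : W} (hw : w ≠ r) (hc : T.Adj r c)
    (hm : w ∈ sub T r c) : pick hT r w hw = c :=
  sub_unique hT (T.dist r w) rfl (pick_adj hT r w hw) hc (pick_mem hT r w hw) hm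

variable {V : Type} {G : SimpleGraph V}

/-- The data attached to one subtree: an image for `c` adjacent to `u`, together with a
homomorphism of the subtree sending `c` there. -/
def SubHom [Fintype V] [DecidableRel G.Adj] (T : SimpleGraph W) (r : W) (u : V)
    (c : T.neighborSet r) : Type :=
  Σ v : G.neighborFinset u,
    {f' : T.induce (sub T r ↑c) →g G // f' ⟨↑c, mem_sub_self c.2⟩ = ↑v}

lemma SubHom.ext [Fintype V] [DecidableRel G.Adj] {r : W} {u : V} {c : T.neighborSet r}
    {p q : SubHom (G := G) T r u c} (h : p.2.1 = q.2.1) : p = q := by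
  obtain ⟨v, f, hf⟩ := p
  obtain ⟨v', f', hf'⟩ := q
  dsimp at h
  subst h
  obtain rfl : v = v' := Subtype.ext (by rw [← hf, ← hf'])
  rfl

section Glue
variable [Fintype V] [DecidableRel G.Adj]

open Classical in
noncomputable def glueFun (hT : T.IsTree) (r : W) (u : V)
    (F : ∀ c : T.neighborSet r, SubHom (G := G) T r u c) : W → V :=
  fun w => if hw : w = r then u else
    (F ⟨pick hT r w hw, pick_adj hT r w hw⟩).2.1 ⟨w, pick_mem hT r w hw⟩

lemma glueFun_eq (hT : T.IsTree) (r : W) (u : V)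
    (F : ∀ c : T.neighborSet r, SubHom (G := G) T r u c) {w : W} (hw : w ≠ r)
    (c : T.neighborSet r) (hm : w ∈ sub T r ↑c) :
    glueFun hT r u F w = (F c).2.1 ⟨w, hm⟩ := by
  have h : (⟨pick hT r w hw, pick_adj hT r w hw⟩ : T.neighborSet r) = c :=
    Subtype.ext (pick_eq hT hw c.2 hm)
  unfold glueFun
  rw [dif_neg hw]
  cases h
  rfl

lemma glueFun_root (hT : T.IsTree) (r : W) (u : V)
    (F : ∀ c : T.neighborSet r, SubHom (G := G) T r u c) :
    glueFun hT r u F r = u := by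
  unfold glueFun
  rw [dif_pos rfl]

noncomputable def glueHom (hT : T.IsTree) (r : W) (u : V)
    (F : ∀ c : T.neighborSet r, SubHom (G := G) T r u c) : T →g G where
  toFun := glueFun hT r u F
  map_rel' := by
    have hroot : ∀ {b : W}, T.Adj r b → G.Adj u (glueFun hT r u F b) := by
      intro b hb
      have hbr : b ≠ r := hb.ne'
      rw [glueFun_eq hT r u F hbr ⟨b, hb⟩ (mem_sub_self hb)]
      have h2 := (F ⟨b, hb⟩).2.2
      rw [h2]
      exact (SimpleGraph.mem_neighborFinset _ _ _).1 (F ⟨b, hb⟩).1.2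
    intro a b hab
    by_cases har : a = r
    · subst har
      rw [glueFun_root]
      exact hroot hab
    by_cases hbr : b = r
    · subst hbr
      rw [glueFun_root]
      exact (hroot hab.symm).symm
    · set c : T.neighborSet r := ⟨pick hT r a har, pick_adj hT r a har⟩ with hc
      have hma : a ∈ sub T r ↑c := pick_mem hT r a har
      have hmb : b ∈ sub T r ↑c := by
        by_contra hmb
        exact hbr (cross_edge hT c.2 hma hab hmb)
      rw [glueFun_eq hT r u F har c hma, glueFun_eq hT r u F hbr c hmb]
      exact (F c).2.1.map_rel' (by exact hab)
end Glue

noncomputable def restrictF [Fintype V] [DecidableRel G.Adj] (hT : T.IsTree) (r : W) (u : V)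
    (f : {f : T →g G // f r = u}) (c : T.neighborSet r) : SubHom (G := G) T r u c :=
  ⟨⟨f.1 ↑c,
      by
        have h : G.Adj (f.1 r) (f.1 ↑c) := f.1.map_rel' c.2
        rw [f.2] at h
        exact (SimpleGraph.mem_neighborFinset _ _ _).2 h⟩,
    ⟨(f.1).comp (SimpleGraph.Embedding.induce (sub T r ↑c)).toHom, rfl⟩⟩

noncomputable def glueSub [Fintype V] [DecidableRel G.Adj] (hT : T.IsTree) (r : W) (u : V)
    (F : ∀ c : T.neighborSet r, SubHom (G := G) T r u c) : {f : T →g G // f r = u} :=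
  ⟨glueHom hT r u F, glueFun_root hT r u F⟩

lemma glue_restrict [Fintype V] [DecidableRel G.Adj] (hT : T.IsTree) (r : W) (u : V)
    (f : {f : T →g G // f r = u}) : glueSub hT r u (restrictF hT r u f) = f := by
  apply Subtype.ext
  apply DFunLike.ext
  intro w
  show glueFun hT r u (restrictF hT r u f) w = f.1 w
  by_cases hw : w = r
  · subst hw
    rw [glueFun_root, f.2]
  · unfold glueFun
    rw [dif_neg hw]
    rfl

lemma restrict_glue [Fintype V] [DecidableRel G.Adj] (hT : T.IsTree) (r : W) (u : V)
    (F : ∀ c : T.neighborSet r, SubHom (G := G) T r u c) :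
    restrictF hT r u (glueSub hT r u F) = F := by
  funext c
  apply SubHom.ext
  apply DFunLike.ext
  intro x
  show glueFun hT r u F ↑x = (F c).2.1 x
  have hx : ↑x ∈ sub T r ↑c := x.2
  have hxr : (↑x : W) ≠ r := fun h => root_not_mem_sub (h ▸ hx)
  rw [glueFun_eq hT r u F hxr c hx]

noncomputable def decompEquiv [Fintype V] [DecidableRel G.Adj] (hT : T.IsTree) (r : W) (u : V) :
    {f : T →g G // f r = u} ≃ ∀ c : T.neighborSet r, SubHom (G := G) T r u c :=
  ⟨restrictF hT r u, glueSub hT r u, glue_restrict hT r u, restrict_glue hT r u⟩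


lemma finite_hom {A B : Type} [Finite A] [Finite B] (H : SimpleGraph A) (K : SimpleGraph B) :
    Finite (H →g K) :=
  Finite.of_injective (fun f => (f : A → B)) DFunLike.coe_injective

lemma nat_card_sigma {ι : Type} [Fintype ι] {β : ι → Type} [∀ i, Finite (β i)] :
    Nat.card (Σ i, β i) = ∑ i, Nat.card (β i) := by
  haveI : ∀ i, Fintype (β i) := fun i => Fintype.ofFinite _
  simp [Nat.card_eq_fintype_card, Fintype.card_sigma]

end WLProof

/-- Abstract count of homomorphisms of the rooted tree `(T, r)` into any graph, computed from
a WL label of level `k`. -/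
noncomputable def cnt : (k : ℕ) → {W : Type} → (T : SimpleGraph W) → (r : W) → WLLabel k → ℕ
  | 0, _, _, _, _ => 1
  | k+1, _, T, r, μ =>
    ∏ᶠ c : (T.neighborSet r),
      (Multiset.map (cnt k (T.induce (WLProof.sub T r ↑c)) ⟨↑c, WLProof.mem_sub_self c.2⟩)
        (μ : Multiset (WLLabel k))).sum

namespace WLProof

lemma main (k : ℕ) :
    ∀ {W : Type} [Fintype W] (T : SimpleGraph W), T.IsTree → ∀ (r : W),
      (∀ w, T.dist r w ≤ k) →
      ∀ {V : Type} [Fintype V] (G : SimpleGraph V) [DecidableRel G.Adj] (u : V),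
        Nat.card {f : T →g G // f r = u} = cnt k T r (wlLabel G k u) := by
  induction k with
  | zero =>
    intro W _ T hT r hd V _ G _ u
    have hall : ∀ w : W, w = r := fun w =>
      ((hT.isConnected.dist_eq_zero_iff).1 (Nat.le_zero.1 (hd w))).symm
    haveI : Unique {f : T →g G // f r = u} :=
      { default := ⟨⟨fun _ => u, fun {a b} hab =>
          absurd (by rwa [hall a, hall b] at hab) (T.loopless.irrefl r)⟩, rfl⟩
        uniq := fun f => Subtype.ext (DFunLike.ext _ _ fun w => by
          rw [hall w]; exact f.2) }
    rw [Nat.card_unique]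
    rfl
  | succ k ih =>
    intro W _ T hT r hd V _ G _ u
    classical
    haveI : Fintype ↥(T.neighborSet r) := Fintype.ofFinite _
    rw [Nat.card_congr (decompEquiv hT r u), Nat.card_pi]
    have hc : cnt (k+1) T r (wlLabel G (k+1) u) =
        ∏ᶠ c : (T.neighborSet r),
          (Multiset.map (cnt k (T.induce (sub T r ↑c)) ⟨↑c, mem_sub_self c.2⟩)
            ((wlLabel G (k+1) u : Multiset (WLLabel k)))).sum := rfl
    rw [hc, finprod_eq_prod_of_fintype]
    apply Finset.prod_congr rfl
    intro c _
    haveI : Finite (T.induce (sub T r ↑c) →g G) := finite_hom _ _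
    show Nat.card (Σ v : G.neighborFinset u,
        {f' : T.induce (sub T r ↑c) →g G // f' ⟨↑c, mem_sub_self c.2⟩ = ↑v}) = _
    rw [nat_card_sigma]
    haveI : Fintype ↥(sub T r ↑c) := Fintype.ofFinite _
    have hdep : ∀ x : ↥(sub T r ↑c),
        (T.induce (sub T r ↑c)).dist ⟨↑c, mem_sub_self c.2⟩ x ≤ k := by
      intro x
      have h1 := sub_dist_le hT c.2 x.2
      have h2 : T.dist r ↑x = T.dist ↑c ↑x + 1 := x.2
      have h3 := hd ↑x
      have h4 : (⟨(↑x : W), x.2⟩ : ↥(sub T r ↑c)) = x := rfl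
      rw [h4] at h1
      omega
    have hsub : ∀ v : V,
        Nat.card {f' : T.induce (sub T r ↑c) →g G // f' ⟨↑c, mem_sub_self c.2⟩ = v} =
          cnt k (T.induce (sub T r ↑c)) ⟨↑c, mem_sub_self c.2⟩ (wlLabel G k v) :=
      fun v => ih (T.induce (sub T r ↑c)) (sub_isTree hT c.2) _ hdep G v
    have hwl : (wlLabel G (k+1) u : Multiset (WLLabel k)) =
        (G.neighborFinset u).val.map (wlLabel G k) := rfl
    rw [hwl, Multiset.map_map]
    calc (∑ v : G.neighborFinset u, Nat.card
            {f' : T.induce (sub T r ↑c) →g G // f' ⟨↑c, mem_sub_self c.2⟩ = ↑v})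
        = ∑ v : G.neighborFinset u,
            cnt k (T.induce (sub T r ↑c)) ⟨↑c, mem_sub_self c.2⟩ (wlLabel G k ↑v) := by
          exact Finset.sum_congr rfl (fun v _ => hsub ↑v)
      _ = ∑ v ∈ G.neighborFinset u,
            cnt k (T.induce (sub T r ↑c)) ⟨↑c, mem_sub_self c.2⟩ (wlLabel G k v) :=
        by
          exact Finset.sum_coe_sort (G.neighborFinset u)
            (fun v => cnt k (T.induce (sub T r ↑c)) ⟨↑c, mem_sub_self c.2⟩ (wlLabel G k v))
      _ = (Multiset.map
            ((cnt k (T.induce (sub T r ↑c)) ⟨↑c, mem_sub_self c.2⟩) ∘ wlLabel G k)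
            (G.neighborFinset u).val).sum := rfl

end WLProof

/-- If `u₁` and `u₂` have equal `k`-level WL labels, then every rooted tree of depth at most
`k` has the same number of root-anchored homomorphisms to `(G₁, u₁)` and to `(G₂, u₂)`. -/
theorem wlLabel_eq_rooted_hom_count_eq
    {V₁ V₂ : Type} [Fintype V₁] [Fintype V₂]
    (G₁ : SimpleGraph V₁) (G₂ : SimpleGraph V₂)
    [DecidableRel G₁.Adj] [DecidableRel G₂.Adj]
    (k : ℕ) (u₁ : V₁) (u₂ : V₂)
    (h : wlLabel G₁ k u₁ = wlLabel G₂ k u₂)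
    {W : Type} [Fintype W] (T : SimpleGraph W) (hT : T.IsTree) (r : W)
    (hdepth : ∀ w : W, T.dist r w ≤ k) :
    Nat.card {f : T →g G₁ // f r = u₁} = Nat.card {f : T →g G₂ // f r = u₂} := by
  rw [WLProof.main k T hT r hdepth G₁ u₁, WLProof.main k T hT r hdepth G₂ u₂, h]
end

section
/- Let G₁ and G₂ be finite simple graphs such that for some k the multisets of k-level WL labels of their vertices are equal. Then for every rooted tree (T, r) of depth at most k, the total number of homomorphisms from T to G₁ equals the total number of homomorphisms from T to G₂. -/
open SimpleGraph Finset

section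
variable {W : Type} (T : SimpleGraph W) (r : W)

/-- `u` lies in the subtree rooted at `w` (w on the geodesic from r to u). -/
def InS (w u : W) : Prop := T.dist r u = T.dist r w + T.dist w u

open Classical in
/-- The parent of a vertex (junk value `r` at the root). -/
noncomputable def par (u : W) : W :=
  if h : ∃ x, T.Adj x u ∧ T.dist r x + 1 = T.dist r u then h.choose else r

open Classical in
noncomputable def Ch [Fintype W] (w : W) : Finset W :=
  Finset.univ.filter (fun u => T.Adj w u ∧ T.dist r u = T.dist r w + 1)

noncomputable def DD [Fintype W] : (n : ℕ) → W → WLLabel n → ℕ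
  | 0, _, _ => 1
  | n+1, w, m => ∏ u ∈ Ch T r w, (Multiset.map (DD n u) m).sum

variable {T r}

/-- Support additivity along geodesic walks. -/
lemma dist_add_of_mem_support (hc : T.Connected) {a b x : W} {p : T.Walk a b}
    (hp : p.length = T.dist a b) (hx : x ∈ p.support) :
    T.dist a x + T.dist x b = T.dist a b := by
  classical
  have h1 : T.dist a x ≤ (p.takeUntil x hx).length := dist_le _
  have h2 : T.dist x b ≤ (p.dropUntil x hx).length := dist_le _
  have h3 := congrArg Walk.length (p.take_spec hx)
  rw [Walk.length_append] at h3
  have h4 := hc.dist_triangle (u := a) (v := x) (w := b)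
  omega

lemma adj_dist_one {a b : W} (h : T.Adj a b) : T.dist a b = 1 :=
  SimpleGraph.dist_eq_one_iff_adj.mpr h

/-- Penultimate vertex of a geodesic walk. -/
lemma penult (hc : T.Connected) {a b : W} {p : T.Walk a b}
    (hp : p.length = T.dist a b) (hab : a ≠ b) :
    T.Adj (p.getVert (p.length - 1)) b ∧
      T.dist a (p.getVert (p.length - 1)) + 1 = T.dist a b ∧
      p.getVert (p.length - 1) ∈ p.support := by
  have hl : 0 < p.length := by
    have := hc.pos_dist_of_ne hab; omega
  have hadj : T.Adj (p.getVert (p.length - 1)) (p.getVert (p.length - 1 + 1)) :=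
    p.adj_getVert_succ (by omega)
  rw [show p.length - 1 + 1 = p.length by omega, p.getVert_length] at hadj
  have hmem : p.getVert (p.length - 1) ∈ p.support :=
    Walk.mem_support_iff_exists_getVert.mpr ⟨p.length - 1, rfl, by omega⟩
  have hadd := dist_add_of_mem_support hc hp hmem
  have h1 : T.dist (p.getVert (p.length - 1)) b = 1 := adj_dist_one hadj
  exact ⟨hadj, by omega, hmem⟩

/-- In a tree every path is a geodesic. -/
lemma path_length_eq_dist (hT : T.IsTree) {a b : W} {q : T.Walk a b} (hq : q.IsPath) :
    q.length = T.dist a b := by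
  obtain ⟨p, hp, hl⟩ := hT.isConnected.exists_path_of_dist a b
  have := (hT.existsUnique_path a b).unique hq hp
  rw [this, hl]

/-- Any neighbour one level up is THE parent. -/
lemma eq_par (hT : T.IsTree) {u x : W} (hadj : T.Adj x u)
    (hx : T.dist r x + 1 = T.dist r u) : x = par T r u := by
  have hex : ∃ y, T.Adj y u ∧ T.dist r y + 1 = T.dist r u := ⟨x, hadj, hx⟩
  have hkey : ∀ y z : W, (T.Adj y u ∧ T.dist r y + 1 = T.dist r u) →
      (T.Adj z u ∧ T.dist r z + 1 = T.dist r u) → y = z := by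
    rintro y z ⟨hy, hyd⟩ ⟨hz, hzd⟩
    obtain ⟨py, hpy, hly⟩ := hT.isConnected.exists_path_of_dist r y
    obtain ⟨pz, hpz, hlz⟩ := hT.isConnected.exists_path_of_dist r z
    have hyu : u ∉ py.support := by
      intro hmem
      have := dist_add_of_mem_support hT.isConnected hly hmem
      omega
    have hzu : u ∉ pz.support := by
      intro hmem
      have := dist_add_of_mem_support hT.isConnected hlz hmem
      omega
    have hP1 : (py.concat hy).IsPath := by
      rw [← Walk.isPath_reverse_iff, Walk.reverse_concat, Walk.cons_isPath_iff]
      exact ⟨hpy.reverse, by simpa [Walk.support_reverse] using hyu⟩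
    have hP2 : (pz.concat hz).IsPath := by
      rw [← Walk.isPath_reverse_iff, Walk.reverse_concat, Walk.cons_isPath_iff]
      exact ⟨hpz.reverse, by simpa [Walk.support_reverse] using hzu⟩
    have heq := (hT.existsUnique_path r u).unique hP1 hP2
    have hsup := congrArg (fun w : T.Walk r u => w.reverse.support) heq
    simp only [Walk.reverse_concat, Walk.support_cons] at hsup
    rw [py.reverse.support_eq_cons, pz.reverse.support_eq_cons] at hsup
    simp only [List.cons.injEq] at hsup
    exact hsup.2.1
  have hpar : T.Adj (par T r u) u ∧ T.dist r (par T r u) + 1 = T.dist r u := by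
    rw [par, dif_pos hex]
    exact hex.choose_spec
  exact hkey _ _ ⟨hadj, hx⟩ hpar

/-- Every non-root vertex has a parent. -/
lemma par_spec (hT : T.IsTree) {u : W} (hu : u ≠ r) :
    T.Adj (par T r u) u ∧ T.dist r (par T r u) + 1 = T.dist r u := by
  obtain ⟨p, hp, hl⟩ := hT.isConnected.exists_path_of_dist r u
  obtain ⟨hadj, hd, -⟩ := penult hT.isConnected hl (Ne.symm hu)
  have := eq_par hT hadj hd
  rw [← this]
  exact ⟨hadj, hd⟩
end

section
variable {W : Type} {T : SimpleGraph W} {r : W}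

/-- Edge classification in a tree relative to a root. -/
lemma edge_class (hT : T.IsTree) {a b : W} (hab : T.Adj a b) :
    T.dist r b = T.dist r a + 1 ∨ T.dist r a = T.dist r b + 1 := by
  obtain ⟨p, hp, hl⟩ := hT.isConnected.exists_path_of_dist r a
  by_cases hb : b ∈ p.support
  · right
    have := dist_add_of_mem_support hT.isConnected hl hb
    have h1 : T.dist b a = 1 := adj_dist_one hab.symm
    omega
  · left
    have hP : (p.concat hab).IsPath := by
      rw [← Walk.isPath_reverse_iff, Walk.reverse_concat, Walk.cons_isPath_iff]
      exact ⟨hp.reverse, by simpa [Walk.support_reverse] using hb⟩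
    have := path_length_eq_dist hT hP
    rw [Walk.length_concat, hl] at this
    omega

lemma InS_self (w : W) : InS T r w w := by
  simp [InS, SimpleGraph.dist_self]

lemma InS_root (u : W) : InS T r r u := by
  simp [InS, SimpleGraph.dist_self]

variable [Fintype W]

lemma mem_Ch {w u : W} : u ∈ Ch T r w ↔ T.Adj w u ∧ T.dist r u = T.dist r w + 1 := by
  classical
  simp [Ch]

lemma Ch_InS {w u : W} (hu : u ∈ Ch T r w) : InS T r w u := by
  obtain ⟨hadj, hd⟩ := mem_Ch.mp hu
  have := adj_dist_one hadj
  simp [InS, hd, this]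

lemma Ch_par (hT : T.IsTree) {w u : W} (hu : u ∈ Ch T r w) : par T r u = w := by
  obtain ⟨hadj, hd⟩ := mem_Ch.mp hu
  exact (eq_par hT hadj (by omega)).symm

/-- The subtree of a child is inside the subtree of the parent. -/
lemma Ch_sub (hc : T.Connected) {w u x : W} (hu : u ∈ Ch T r w) (hx : InS T r u x) :
    InS T r w x ∧ T.dist w x = T.dist u x + 1 := by
  obtain ⟨hadj, hd⟩ := mem_Ch.mp hu
  have hwu : T.dist w u = 1 := adj_dist_one hadj
  have h1 : T.dist w x ≤ T.dist w u + T.dist u x := hc.dist_triangle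
  have h2 : T.dist r x ≤ T.dist r w + T.dist w x := hc.dist_triangle
  have h3 : T.dist r x = T.dist r u + T.dist u x := hx
  constructor <;> (unfold InS at *; omega)

/-- The parent of a non-root vertex of a subtree stays in the subtree. -/
lemma par_InS (hT : T.IsTree) {w u' : W} (h : InS T r w u') (hne : u' ≠ w) :
    InS T r w (par T r u') ∧ T.dist w (par T r u') + 1 = T.dist w u' := by
  have hdpos : 0 < T.dist w u' := hT.isConnected.pos_dist_of_ne (Ne.symm hne)
  have hur : u' ≠ r := by
    intro h'
    unfold InS at h
    rw [h'] at h hdpos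
    rw [SimpleGraph.dist_self] at h
    omega
  obtain ⟨p1, hl1⟩ := hT.isConnected.exists_walk_length_eq_dist r w
  obtain ⟨p2, hl2⟩ := hT.isConnected.exists_walk_length_eq_dist w u'
  have hql : (p1.append p2).length = T.dist r u' := by
    rw [Walk.length_append, hl1, hl2]; exact h.symm
  obtain ⟨hadj, hd, hmem⟩ := penult hT.isConnected hql (Ne.symm hur)
  set x := (p1.append p2).getVert ((p1.append p2).length - 1) with hxdef
  have hxpar : x = par T r u' := eq_par hT hadj hd
  rw [Walk.mem_support_append_iff] at hmem
  have hxr : T.dist r x + 1 = T.dist r u' := hd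
  rcases hmem with hm | hm
  · -- x on the geodesic from r to w
    have hadd := dist_add_of_mem_support hT.isConnected hl1 hm
    have hxw0 : T.dist x w = 0 := by unfold InS at h; omega
    have hxw : x = w := (hT.isConnected.dist_eq_zero_iff).mp hxw0
    refine ⟨?_, ?_⟩
    · rw [← hxpar, hxw]; exact InS_self w
    · rw [← hxpar, hxw]
      have : T.dist w w = 0 := SimpleGraph.dist_self
      unfold InS at h; omega
  · -- x on the geodesic from w to u'
    have hadd := dist_add_of_mem_support hT.isConnected hl2 hm
    have hx1 : T.dist x u' = 1 := adj_dist_one hadj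
    rw [← hxpar]
    constructor
    · unfold InS at h ⊢; omega
    · omega

/-- Existence of the child whose subtree contains a given vertex. -/
lemma child_exists (hT : T.IsTree) : ∀ (n : ℕ) {w u' : W}, InS T r w u' →
    T.dist w u' = n + 1 → ∃ u ∈ Ch T r w, InS T r u u' := by
  intro n
  induction n with
  | zero =>
    intro w u' h hd
    have hadj : T.Adj w u' := SimpleGraph.dist_eq_one_iff_adj.mp hd
    refine ⟨u', mem_Ch.mpr ⟨hadj, by unfold InS at h; omega⟩, InS_self u'⟩
  | succ n ih =>
    intro w u' h hd
    have hne : u' ≠ w := by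
      intro h'; subst h'; rw [SimpleGraph.dist_self] at hd; omega
    obtain ⟨hpS, hpd⟩ := par_InS hT h hne
    obtain ⟨u, hu, hS⟩ := ih hpS (by omega)
    have hur : u' ≠ r := by
      intro h'
      unfold InS at h
      rw [h'] at h hd
      rw [SimpleGraph.dist_self] at h
      omega
    obtain ⟨hadj, hdd⟩ := par_spec hT hur
    refine ⟨u, hu, ?_⟩
    have h1 : T.dist u u' ≤ T.dist u (par T r u') + 1 := by
      have := hT.isConnected.dist_triangle (u := u) (v := par T r u') (w := u')
      have := adj_dist_one hadj
      omega
    have h2 : T.dist r u' ≤ T.dist r u + T.dist u u' := hT.isConnected.dist_triangle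
    unfold InS at hS h ⊢
    have := (mem_Ch.mp hu).2
    omega

/-- Uniqueness of that child. -/
lemma child_unique (hT : T.IsTree) {w u₁ u₂ u' : W} (h₁ : u₁ ∈ Ch T r w)
    (h₂ : u₂ ∈ Ch T r w) (s₁ : InS T r u₁ u') (s₂ : InS T r u₂ u') : u₁ = u₂ := by
  obtain ⟨p₁, hl₁⟩ := hT.isConnected.exists_walk_length_eq_dist u₁ u'
  obtain ⟨p₂, hl₂⟩ := hT.isConnected.exists_walk_length_eq_dist u₂ u'
  have hd₁ := (Ch_sub hT.isConnected h₁ s₁).2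
  have hd₂ := (Ch_sub hT.isConnected h₂ s₂).2
  have hD : T.dist u₁ u' + 1 = T.dist u₂ u' + 1 := by omega
  have hP₁ : (Walk.cons (mem_Ch.mp h₁).1 p₁).IsPath := by
    apply Walk.isPath_of_length_eq_dist
    rw [Walk.length_cons, hl₁]; omega
  have hP₂ : (Walk.cons (mem_Ch.mp h₂).1 p₂).IsPath := by
    apply Walk.isPath_of_length_eq_dist
    rw [Walk.length_cons, hl₂]; omega
  have heq := (hT.existsUnique_path w u').unique hP₁ hP₂
  have hsup := congrArg Walk.support heq
  rw [Walk.support_cons, Walk.support_cons, p₁.support_eq_cons, p₂.support_eq_cons] at hsup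
  simp only [List.cons.injEq] at hsup
  exact hsup.2.1

open Classical in
/-- The child of `w` whose subtree contains `u'`. -/
noncomputable def chOf (T : SimpleGraph W) (r w u' : W) : W :=
  if h : ∃ u, u ∈ Ch T r w ∧ InS T r u u' then h.choose else r

lemma chOf_spec (hT : T.IsTree) {w u' : W} (h : InS T r w u') (hne : u' ≠ w) :
    chOf T r w u' ∈ Ch T r w ∧ InS T r (chOf T r w u') u' := by
  have hdpos : 0 < T.dist w u' := hT.isConnected.pos_dist_of_ne (Ne.symm hne)
  obtain ⟨u, hu, hS⟩ := child_exists hT (T.dist w u' - 1) h (by omega)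
  have hex : ∃ u, u ∈ Ch T r w ∧ InS T r u u' := ⟨u, hu, hS⟩
  rw [chOf, dif_pos hex]
  exact hex.choose_spec

lemma chOf_eq (hT : T.IsTree) {w u u' : W} (hu : u ∈ Ch T r w) (hs : InS T r u u') :
    chOf T r w u' = u := by
  have hex : ∃ x, x ∈ Ch T r w ∧ InS T r x u' := ⟨u, hu, hs⟩
  rw [chOf, dif_pos hex]
  exact child_unique hT hex.choose_spec.1 hu hex.choose_spec.2 hs

end

section Counting
variable {W V : Type} [Fintype W] [Fintype V]
variable (T : SimpleGraph W) (r : W) (G : SimpleGraph V)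

/-- Partial homomorphisms on the subtree of `w`, rooted value `v`. -/
def AA (w : W) (v : V) : Type :=
  {g : {u : W // InS T r w u} → V //
    (∀ hw : InS T r w w, g ⟨w, hw⟩ = v) ∧
    ∀ (u : W) (hu : InS T r w u), u ≠ w → ∀ hp : InS T r w (par T r u),
      G.Adj (g ⟨par T r u, hp⟩) (g ⟨u, hu⟩)}

/-- Partial homomorphisms on the subtree of `u`, rooted at a neighbour of `v`. -/
def BB (u : W) (v : V) : Type :=
  {g : {x : W // InS T r u x} → V //
    (∀ hu : InS T r u u, G.Adj v (g ⟨u, hu⟩)) ∧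
    ∀ (x : W) (hx : InS T r u x), x ≠ u → ∀ hp : InS T r u (par T r x),
      G.Adj (g ⟨par T r x, hp⟩) (g ⟨x, hx⟩)}

instance (w : W) (v : V) : Finite (AA T r G w v) := by unfold AA; infer_instance
instance (u : W) (v : V) : Finite (BB T r G u v) := by unfold BB; infer_instance

variable {T r G}

lemma Ch_ne_w (hc : T.Connected) {w u x : W} (hu : u ∈ Ch T r w) (hx : InS T r u x) :
    x ≠ w := by
  have h2 := (Ch_sub hc hu hx).2
  intro h
  subst h
  rw [SimpleGraph.dist_self] at h2
  omega

lemma Ch_ne_r (hc : T.Connected) {w u x : W} (hu : u ∈ Ch T r w) (hx : InS T r u x) :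
    x ≠ r := by
  have h1 : T.dist r x = T.dist r u + T.dist u x := hx
  have hd := (mem_Ch.mp hu).2
  intro h
  rw [h, SimpleGraph.dist_self] at h1
  omega

/-- Evaluation of a family is invariant under index equality. -/
lemma BB_eval_congr {w : W} {v : V} (F : ∀ u : (Ch T r w : Finset W), BB T r G u.1 v)
    {u₁ u₂ x : W} (e : u₁ = u₂) (h₁ : u₁ ∈ Ch T r w) (h₂ : u₂ ∈ Ch T r w)
    (hx₁ : InS T r u₁ x) (hx₂ : InS T r u₂ x) :
    (F ⟨u₁, h₁⟩).1 ⟨x, hx₁⟩ = (F ⟨u₂, h₂⟩).1 ⟨x, hx₂⟩ := by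
  subst e; rfl

/-- The decomposition map at `w`. -/
noncomputable def Phi (hT : T.IsTree) (w : W) (v : V) (g : AA T r G w v) :
    ∀ u : (Ch T r w : Finset W), BB T r G u.1 v := fun u =>
  ⟨fun x => g.1 ⟨x.1, (Ch_sub hT.isConnected u.2 x.2).1⟩, by
    intro hu
    have hne : u.1 ≠ w := (mem_Ch.mp u.2).1.ne'
    have hpw : par T r u.1 = w := Ch_par hT u.2
    have hpmem : InS T r w (par T r u.1) := by rw [hpw]; exact InS_self w
    have h2 := g.2.2 u.1 (Ch_sub hT.isConnected u.2 hu).1 hne hpmem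
    have hval : g.1 ⟨par T r u.1, hpmem⟩ = v := by
      have he : (⟨par T r u.1, hpmem⟩ : {x : W // InS T r w x}) = ⟨w, InS_self w⟩ :=
        Subtype.ext hpw
      rw [he]
      exact g.2.1 (InS_self w)
    rw [hval] at h2
    exact h2, by
    intro x hx hne hp
    have hxw : x ≠ w := Ch_ne_w hT.isConnected u.2 hx
    exact g.2.2 x (Ch_sub hT.isConnected u.2 hx).1 hxw (Ch_sub hT.isConnected u.2 hp).1⟩

lemma Phi_bijective (hT : T.IsTree) (w : W) (v : V) :
    Function.Bijective (Phi (T := T) (r := r) (G := G) hT w v) := by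
  constructor
  · -- injective
    intro g₁ g₂ hg
    apply Subtype.ext
    funext x
    obtain ⟨x, hx⟩ := x
    by_cases hxw : x = w
    · subst hxw
      rw [g₁.2.1 hx, g₂.2.1 hx]
    · obtain ⟨hmem, hS⟩ := chOf_spec hT hx hxw
      have h1 := congrFun hg ⟨chOf T r w x, hmem⟩
      have h2 := congrArg Subtype.val h1
      exact congrFun h2 ⟨x, hS⟩
  · -- surjective
    intro F
    classical
    refine ⟨⟨fun x => if hxw : x.1 = w then v else
        (F ⟨chOf T r w x.1, (chOf_spec hT x.2 hxw).1⟩).1 ⟨x.1, (chOf_spec hT x.2 hxw).2⟩,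
        ?_, ?_⟩, ?_⟩
    · intro hw
      simp
    · intro x hx hne hp
      simp only [dif_neg hne]
      have hxr : x ≠ r := by
        intro h
        unfold InS at hx
        rw [h] at hx hne
        rw [SimpleGraph.dist_self] at hx
        have := hT.isConnected.pos_dist_of_ne (Ne.symm hne)
        omega
      obtain ⟨hpadj, hpd⟩ := par_spec hT hxr
      have hmem := (chOf_spec hT hx hne).1
      have hxS := (chOf_spec hT hx hne).2
      by_cases hpw : par T r x = w
      · -- x is itself a child of w
        simp only [dif_pos hpw]
        have hxch : x ∈ Ch T r w := mem_Ch.mpr ⟨hpw ▸ hpadj, by rw [← hpw]; omega⟩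
        have hce : chOf T r w x = x := chOf_eq hT hxch (InS_self x)
        have hIuu : InS T r (chOf T r w x) (chOf T r w x) := by rw [hce]; exact InS_self x
        have hv := (F ⟨chOf T r w x, hmem⟩).2.1 hIuu
        have he : (⟨chOf T r w x, hIuu⟩ : {y // InS T r (chOf T r w x) y}) = ⟨x, hxS⟩ :=
          Subtype.ext hce
        rw [he] at hv
        exact hv
      · -- the parent lies in the same child subtree
        simp only [dif_neg hpw]
        set u := chOf T r w x with hu
        have hxu : x ≠ u := by
          intro h
          rw [← h] at hmem
          exact hpw (Ch_par hT hmem)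
        have hparSu : InS T r u (par T r x) := (par_InS hT hxS hxu).1
        have hce : chOf T r w (par T r x) = u := chOf_eq hT hmem hparSu
        have key := (F ⟨u, hmem⟩).2.2 x hxS hxu hparSu
        have e1 := BB_eval_congr F hce (chOf_spec hT hp hpw).1 hmem
          (chOf_spec hT hp hpw).2 hparSu
        rw [e1]
        exact key
    · -- Phi of the constructed element is F
      funext u
      apply Subtype.ext
      funext x
      obtain ⟨x, hx⟩ := x
      have hxw : x ≠ w := Ch_ne_w hT.isConnected u.2 hx
      simp only [Phi, dif_neg hxw]
      exact BB_eval_congr F (chOf_eq hT u.2 hx)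
        (chOf_spec hT (Ch_sub hT.isConnected u.2 hx).1 hxw).1 u.2
        (chOf_spec hT (Ch_sub hT.isConnected u.2 hx).1 hxw).2 hx

end Counting

section Counting2
variable {W V : Type} [Fintype W] [Fintype V]
variable {T : SimpleGraph W} {r : W} {G : SimpleGraph V}

lemma natCard_sigma {ι : Type} [Fintype ι] (f : ι → Type) [∀ i, Finite (f i)] :
    Nat.card ((i : ι) × f i) = ∑ i, Nat.card (f i) := by
  letI : ∀ i, Fintype (f i) := fun i => Fintype.ofFinite (f i)
  rw [Nat.card_eq_fintype_card, Fintype.card_sigma]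
  exact Finset.sum_congr rfl fun i _ => (Nat.card_eq_fintype_card).symm

variable [DecidableRel G.Adj]

/-- The root value of a `BB` element, as an element of the neighbourhood. -/
def rootMap (u : W) (v : V) (b : BB T r G u v) : (G.neighborFinset v : Finset V) :=
  ⟨b.1 ⟨u, InS_self u⟩, by
    rw [SimpleGraph.mem_neighborFinset]
    exact b.2.1 (InS_self u)⟩

def fiberEquiv (u : W) (v : V) (v' : (G.neighborFinset v : Finset V)) :
    {b : BB T r G u v // rootMap u v b = v'} ≃ AA T r G u v'.1 where
  toFun b := ⟨b.1.1, fun _ => congrArg Subtype.val b.2, b.1.2.2⟩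
  invFun a := ⟨⟨a.1, fun hu => by
      rw [a.2.1 hu]
      exact (SimpleGraph.mem_neighborFinset _ _ _).mp v'.2, a.2.2⟩,
    Subtype.ext (a.2.1 (InS_self u))⟩
  left_inv b := Subtype.ext (Subtype.ext rfl)
  right_inv a := Subtype.ext rfl

lemma card_BB (u : W) (v : V) :
    Nat.card (BB T r G u v) = ∑ v' ∈ G.neighborFinset v, Nat.card (AA T r G u v') := by
  have e1 : Nat.card (BB T r G u v) =
      Nat.card ((v' : (G.neighborFinset v : Finset V)) × {b : BB T r G u v // rootMap u v b = v'}) :=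
    (Nat.card_congr (Equiv.sigmaFiberEquiv (rootMap u v))).symm
  rw [e1, natCard_sigma]
  rw [← Finset.sum_coe_sort (G.neighborFinset v) (fun v' => Nat.card (AA T r G u v'))]
  exact Finset.sum_congr rfl fun v' _ => Nat.card_congr (fiberEquiv u v v')

lemma card_AA (hT : T.IsTree) : ∀ (n : ℕ) (w : W) (v : V),
    (∀ x, InS T r w x → T.dist w x ≤ n) →
    Nat.card (AA T r G w v) = DD T r n w (wlLabel G n v) := by
  intro n
  induction n with
  | zero =>
    intro w v hdep
    have key : ∀ x : W, InS T r w x → x = w := fun x hx =>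
      (hT.isConnected.dist_eq_zero_iff.mp (Nat.le_zero.mp (hdep x hx))).symm
    have h1 : Nat.card (AA T r G w v) = 1 := by
      rw [Nat.card_eq_one_iff_unique]
      constructor
      · constructor
        intro g₁ g₂
        apply Subtype.ext
        funext x
        obtain ⟨x, hx⟩ := x
        have hxw := key x hx
        subst hxw
        rw [g₁.2.1 hx, g₂.2.1 hx]
      · exact ⟨⟨fun _ => v, fun _ => rfl,
          fun u hu hne _ => absurd (key u hu) hne⟩⟩
    rw [h1]
    rfl
  | succ n ih =>
    intro w v hdep
    have e1 : Nat.card (AA T r G w v) =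
        Nat.card (∀ u : (Ch T r w : Finset W), BB T r G u.1 v) :=
      Nat.card_eq_of_bijective _ (Phi_bijective hT w v)
    rw [e1, Nat.card_pi, Finset.prod_coe_sort (Ch T r w) (fun u => Nat.card (BB T r G u v))]
    have e2 : ∀ u ∈ Ch T r w,
        Nat.card (BB T r G u v) = (Multiset.map (DD T r n u) (wlLabel G (n + 1) v)).sum := by
      intro u hu
      rw [card_BB]
      have e3 : ∀ v' ∈ G.neighborFinset v,
          Nat.card (AA T r G u v') = DD T r n u (wlLabel G n v') := by
        intro v' _
        apply ih
        intro x hx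
        have := (Ch_sub hT.isConnected hu hx).2
        have h4 := hdep x (Ch_sub hT.isConnected hu hx).1
        omega
      rw [Finset.sum_congr rfl e3]
      show ∑ v' ∈ G.neighborFinset v, (DD T r n u ∘ wlLabel G n) v' = _
      rw [Finset.sum_eq_multiset_sum]
      have : wlLabel G (n + 1) v = Multiset.map (wlLabel G n) (G.neighborFinset v).val := by
        rfl
      rw [this, Multiset.map_map]
    rw [Finset.prod_congr rfl e2]
    rfl

def homEquiv (hT : T.IsTree) (v : V) : {f : T →g G // f r = v} ≃ AA T r G r v where
  toFun f := ⟨fun x => f.1 x.1, fun _ => f.2, by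
    intro u hu hne hp
    exact f.1.map_adj (par_spec hT hne).1⟩
  invFun g := ⟨⟨fun x => g.1 ⟨x, InS_root x⟩, by
    intro a b hab
    rcases edge_class hT hab with hd | hd
    · have hbr : b ≠ r := by
        intro hh
        rw [hh, SimpleGraph.dist_self] at hd
        omega
      have hpb : par T r b = a := (eq_par hT hab (by omega)).symm
      have h2 := g.2.2 b (InS_root b) hbr (InS_root _)
      have he : (⟨par T r b, InS_root _⟩ : {u // InS T r r u}) = ⟨a, InS_root a⟩ :=
        Subtype.ext hpb
      rw [he] at h2
      exact h2
    · have har : a ≠ r := by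
        intro hh
        rw [hh, SimpleGraph.dist_self] at hd
        omega
      have hpa : par T r a = b := (eq_par hT hab.symm (by omega)).symm
      have h2 := g.2.2 a (InS_root a) har (InS_root _)
      have he : (⟨par T r a, InS_root _⟩ : {u // InS T r r u}) = ⟨b, InS_root b⟩ :=
        Subtype.ext hpa
      rw [he] at h2
      exact h2.symm⟩, g.2.1 (InS_root r)⟩
  left_inv f := rfl
  right_inv g := rfl

lemma card_hom (hT : T.IsTree) (k : ℕ) (hdepth : ∀ x : W, T.dist r x ≤ k) :
    Nat.card (T →g G) = ((wlMultiset G k).map (DD T r k r)).sum := by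
  have hfin : Finite (T →g G) :=
    Finite.of_injective (fun f => (f : W → V)) DFunLike.coe_injective
  have e1 : Nat.card (T →g G) = Nat.card ((v : V) × {f : T →g G // f r = v}) :=
    (Nat.card_congr (Equiv.sigmaFiberEquiv (fun f : T →g G => f r))).symm
  rw [e1, natCard_sigma]
  have e2 : ∀ v : V, Nat.card {f : T →g G // f r = v} = DD T r k r (wlLabel G k v) := by
    intro v
    rw [Nat.card_congr (homEquiv hT v)]
    exact card_AA hT k r v (fun x _ => hdepth x)
  rw [Finset.sum_congr rfl (fun v _ => e2 v)]
  show ∑ v : V, (DD T r k r ∘ wlLabel G k) v = _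
  rw [Finset.sum_eq_multiset_sum, wlMultiset, Multiset.map_map]

end Counting2

/-- If two graphs have equal multisets of `k`-level WL labels, then every rooted tree of
depth at most `k` has the same total number of homomorphisms to both graphs. -/
theorem wlMultiset_eq_hom_count_eq
    {V₁ V₂ : Type} [Fintype V₁] [Fintype V₂]
    (G₁ : SimpleGraph V₁) (G₂ : SimpleGraph V₂)
    [DecidableRel G₁.Adj] [DecidableRel G₂.Adj]
    (k : ℕ) (h : wlMultiset G₁ k = wlMultiset G₂ k)
    {W : Type} [Fintype W] (T : SimpleGraph W) (hT : T.IsTree) (r : W)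
    (hdepth : ∀ w : W, T.dist r w ≤ k) :
    Nat.card (T →g G₁) = Nat.card (T →g G₂) := by
  rw [card_hom hT k hdepth, card_hom hT k hdepth, h]
end
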